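/- arXiv:1106.4591 — 3 statements merged into one kernel-verified Lean document; each statement's English description precedes it below -/
import Mathlib

section
/- Let θ̂ be an even, rapidly decaying Fourier-side solution of the SQG equation. Then the quantity Σ_{k∈ℤ², k≠0} θ̂_k(t)²/|k| is independent of t ∈ [0,∞) (conservation of the H^{−1/2} norm). -/
open scoped BigOperators

noncomputable section

/-- Euclidean norm of a lattice point `k ∈ ℤ²`. -/
def znorm (k : ℤ × ℤ) : ℝ := Real.sqrt ((k.1 : ℝ) ^ 2 + (k.2 : ℝ) ^ 2)

/-- Wedge product `l ∧ m = l₁ m₂ − l₂ m₁`. -/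
def wedge (l m : ℤ × ℤ) : ℝ := ((l.1 * m.2 - l.2 * m.1 : ℤ) : ℝ)

/-- The summand of the Fourier-side SQG nonlinearity at frequency `k`,
parametrized by `l` (with `m = k - l`); it is set to `0` unless `l ≠ 0` and `m ≠ 0`. -/
def sqgSummand (a : ℤ × ℤ → ℝ) (k l : ℤ × ℤ) : ℝ :=
  if l ≠ 0 ∧ k - l ≠ 0 then
    wedge l (k - l) * (1 / znorm l - 1 / znorm (k - l)) * a l * a (k - l)
  else 0

/-- An even, rapidly decaying Fourier-side solution of the conservative SQG equation
on `[0,∞)` (modelled as a family `θ : ℝ → ℤ² → ℝ` whose defining properties are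
imposed for `t ≥ 0`). -/
structure SQGSol where
  θ : ℝ → ℤ × ℤ → ℝ
  zero_mode : ∀ t : ℝ, 0 ≤ t → θ t 0 = 0
  /-- the nonlinearity is an absolutely convergent sum -/
  rhs_summable : ∀ t : ℝ, 0 ≤ t → ∀ k : ℤ × ℤ,
    Summable fun l : ℤ × ℤ => |sqgSummand (θ t) k l|
  /-- each `t ↦ θ̂_k(t)` is differentiable on `[0,∞)` and satisfies the SQG ODE -/
  ode : ∀ (k : ℤ × ℤ) (t : ℝ), 0 ≤ t →
    HasDerivWithinAt (fun s => θ s k)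
      ((1 / 2) * ∑' l : ℤ × ℤ, sqgSummand (θ t) k l) (Set.Ici 0) t
  /-- rapid decay: for every `T > 0` and `N ∈ ℕ`,
  `sup_{0 ≤ t ≤ T} sup_k (1+|k|)^N |θ̂_k(t)| < ∞` -/
  decay : ∀ T : ℝ, 0 < T → ∀ N : ℕ, ∃ M : ℝ,
    ∀ t ∈ Set.Icc (0 : ℝ) T, ∀ k : ℤ × ℤ, (1 + znorm k) ^ N * |θ t k| ≤ M

/-- The solution is even: `θ̂_{-k}(t) = θ̂_k(t)`. -/
def SQGSol.IsEven (Θ : SQGSol) : Prop :=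
  ∀ t : ℝ, 0 ≤ t → ∀ k : ℤ × ℤ, Θ.θ t (-k) = Θ.θ t k


-- ## Auxiliary lemmas

lemma znorm_nonneg (k : ℤ × ℤ) : 0 ≤ znorm k := Real.sqrt_nonneg _

lemma znorm_zero : znorm 0 = 0 := by simp [znorm]

lemma znorm_neg (k : ℤ × ℤ) : znorm (-k) = znorm k := by simp [znorm]

lemma one_le_znorm {k : ℤ × ℤ} (hk : k ≠ 0) : 1 ≤ znorm k := by
  have h1 : (1 : ℤ) ≤ k.1 ^ 2 + k.2 ^ 2 := by
    rcases (by simpa [Prod.ext_iff] using hk : ¬(k.1 = 0 ∧ k.2 = 0)) with h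
    by_cases h1 : k.1 = 0
    · have h2 : k.2 ≠ 0 := fun hh => h ⟨h1, hh⟩
      have := Int.one_le_abs h2
      nlinarith [sq_abs k.2, sq_nonneg k.1]
    · have := Int.one_le_abs h1
      nlinarith [sq_abs k.1, sq_nonneg k.2]
  have : (1 : ℝ) ≤ (k.1 : ℝ) ^ 2 + (k.2 : ℝ) ^ 2 := by exact_mod_cast h1
  calc (1 : ℝ) = Real.sqrt 1 := by simp
  _ ≤ znorm k := Real.sqrt_le_sqrt this

lemma znorm_pos {k : ℤ × ℤ} (hk : k ≠ 0) : 0 < znorm k := lt_of_lt_of_le one_pos (one_le_znorm hk)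

lemma abs_wedge_le (l m : ℤ × ℤ) : |wedge l m| ≤ znorm l * znorm m := by
  have h : (wedge l m) ^ 2 ≤ ((l.1:ℝ)^2 + (l.2:ℝ)^2) * ((m.1:ℝ)^2 + (m.2:ℝ)^2) := by
    have : ((l.1:ℝ)^2 + (l.2:ℝ)^2) * ((m.1:ℝ)^2 + (m.2:ℝ)^2) - (wedge l m)^2
        = ((l.1:ℝ)*(m.1:ℝ) + (l.2:ℝ)*(m.2:ℝ))^2 := by
      simp only [wedge]; push_cast; ring
    nlinarith [sq_nonneg ((l.1:ℝ)*(m.1:ℝ) + (l.2:ℝ)*(m.2:ℝ))]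
  have := Real.sqrt_le_sqrt h
  rwa [Real.sqrt_sq_eq_abs, Real.sqrt_mul (by positivity), ← znorm, ← znorm] at this

lemma znorm_fst_le (k : ℤ × ℤ) : |(k.1 : ℝ)| ≤ znorm k := by
  rw [← Real.sqrt_sq_eq_abs]; exact Real.sqrt_le_sqrt (by nlinarith [sq_nonneg ((k.2:ℝ))])

lemma znorm_snd_le (k : ℤ × ℤ) : |(k.2 : ℝ)| ≤ znorm k := by
  rw [← Real.sqrt_sq_eq_abs]; exact Real.sqrt_le_sqrt (by nlinarith [sq_nonneg ((k.1:ℝ))])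

lemma znorm_triangle (l m : ℤ × ℤ) : znorm (l + m) ≤ znorm l + znorm m := by
  have key : ∀ p : ℤ × ℤ, znorm p = ‖(⟨(p.1:ℝ), (p.2:ℝ)⟩ : ℂ)‖ := by
    intro p
    rw [Complex.norm_def, Complex.normSq_mk, znorm]
    ring_nf
  rw [key, key, key]
  have : (⟨((l+m).1:ℝ), ((l+m).2:ℝ)⟩ : ℂ) = ⟨(l.1:ℝ), (l.2:ℝ)⟩ + ⟨(m.1:ℝ), (m.2:ℝ)⟩ := by
    apply Complex.ext <;> simp [Complex.add_re, Complex.add_im] <;> push_cast <;> ring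
  rw [this]; exact norm_add_le _ _

lemma one_add_znorm_add_le (l m : ℤ × ℤ) :
    1 + znorm (l + m) ≤ (1 + znorm l) * (1 + znorm m) := by
  have := znorm_triangle l m
  nlinarith [znorm_nonneg l, znorm_nonneg m]

lemma summable_oneDim : Summable fun n : ℤ => ((1 + |(n:ℝ)|) ^ 2)⁻¹ := by
  have hnat : Summable fun n : ℕ => ((1 + (n:ℝ)) ^ 2)⁻¹ := by
    have h := Real.summable_one_div_nat_pow.mpr (by norm_num : 1 < 2)
    have h2 := (summable_nat_add_iff (f := fun n : ℕ => 1 / (n:ℝ)^2) 1).mpr h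
    apply h2.congr
    intro n; push_cast; rw [one_div]; ring_nf
  apply Summable.of_nat_of_neg
  · exact hnat.congr (by intro n; simp)
  · exact hnat.congr (by intro n; simp)

lemma summable_base : Summable fun k : ℤ × ℤ => ((1 + znorm k) ^ 4)⁻¹ := by
  have hb := summable_oneDim.mul_of_nonneg summable_oneDim
    (fun n => by positivity) (fun n => by positivity)
  apply hb.of_nonneg_of_le (fun k => by positivity)
  intro k
  have h1 : (1 + |(k.1:ℝ)|) * (1 + |(k.2:ℝ)|) ≤ (1 + znorm k) ^ 2 := by
    have a1 := znorm_fst_le k; have a2 := znorm_snd_le k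
    nlinarith [abs_nonneg ((k.1:ℝ)), abs_nonneg ((k.2:ℝ)), znorm_nonneg k]
  have h2 : ((1 + |(k.1:ℝ)|) * (1 + |(k.2:ℝ)|)) ^ 2 ≤ ((1 + znorm k) ^ 2) ^ 2 := by
    apply sq_le_sq' _ h1
    nlinarith [abs_nonneg ((k.1:ℝ)), abs_nonneg ((k.2:ℝ)), znorm_nonneg k]
  rw [← mul_inv]
  apply inv_anti₀ (by positivity)
  calc (1 + |(k.1:ℝ)|)^2 * (1 + |(k.2:ℝ)|)^2 = ((1 + |(k.1:ℝ)|) * (1 + |(k.2:ℝ)|))^2 := by ring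
  _ ≤ ((1 + znorm k)^2)^2 := h2
  _ = (1 + znorm k) ^ 4 := by ring

-- wedge permutation lemmas
lemma wedge_swap (l m : ℤ × ℤ) : wedge m l = -wedge l m := by
  simp only [wedge]; push_cast; ring

lemma wedge_c1 (l m : ℤ × ℤ) : wedge m (-(l + m)) = wedge l m := by
  simp only [wedge, Prod.fst_neg, Prod.snd_neg, Prod.fst_add, Prod.snd_add]; push_cast; ring

lemma wedge_c2 (l m : ℤ × ℤ) : wedge (-(l + m)) m = -wedge l m := by
  simp only [wedge, Prod.fst_neg, Prod.snd_neg, Prod.fst_add, Prod.snd_add]; push_cast; ring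

lemma wedge_c3 (l m : ℤ × ℤ) : wedge (-(l + m)) l = wedge l m := by
  simp only [wedge, Prod.fst_neg, Prod.snd_neg, Prod.fst_add, Prod.snd_add]; push_cast; ring

lemma wedge_c4 (l m : ℤ × ℤ) : wedge l (-(l + m)) = -wedge l m := by
  simp only [wedge, Prod.fst_neg, Prod.snd_neg, Prod.fst_add, Prod.snd_add]; push_cast; ring

/-- symmetrized triple summand -/
def Gfun (a : ℤ × ℤ → ℝ) (p : (ℤ × ℤ) × (ℤ × ℤ)) : ℝ :=
  a (p.1 + p.2) / znorm (p.1 + p.2) *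
    (if p.1 ≠ 0 ∧ p.2 ≠ 0 then
      wedge p.1 p.2 * (1 / znorm p.1 - 1 / znorm p.2) * a p.1 * a p.2 else 0)

def eKL : ((ℤ × ℤ) × (ℤ × ℤ)) ≃ ((ℤ × ℤ) × (ℤ × ℤ)) where
  toFun p := (p.2, p.1 - p.2)
  invFun p := (p.1 + p.2, p.1)
  left_inv p := by cases p; simp only [Prod.mk.injEq, and_true, true_and]; ring
  right_inv p := by cases p; simp only [Prod.mk.injEq, and_true, true_and]; ring

def sig2 : ((ℤ × ℤ) × (ℤ × ℤ)) ≃ ((ℤ × ℤ) × (ℤ × ℤ)) where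
  toFun p := (p.2, p.1)
  invFun p := (p.2, p.1)
  left_inv p := by cases p; simp
  right_inv p := by cases p; simp

def sig3 : ((ℤ × ℤ) × (ℤ × ℤ)) ≃ ((ℤ × ℤ) × (ℤ × ℤ)) where
  toFun p := (p.2, -(p.1 + p.2))
  invFun p := (-(p.1 + p.2), p.1)
  left_inv p := by cases p; simp only [Prod.mk.injEq, and_true, true_and]; ring
  right_inv p := by cases p; simp only [Prod.mk.injEq, and_true, true_and]; ring

def sig4 : ((ℤ × ℤ) × (ℤ × ℤ)) ≃ ((ℤ × ℤ) × (ℤ × ℤ)) where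
  toFun p := (-(p.1 + p.2), p.2)
  invFun p := (-(p.1 + p.2), p.2)
  left_inv p := by cases p; simp only [Prod.mk.injEq, and_true, true_and]; ring
  right_inv p := by cases p; simp only [Prod.mk.injEq, and_true, true_and]; ring

def sig5 : ((ℤ × ℤ) × (ℤ × ℤ)) ≃ ((ℤ × ℤ) × (ℤ × ℤ)) where
  toFun p := (-(p.1 + p.2), p.1)
  invFun p := (p.2, -(p.1 + p.2))
  left_inv p := by cases p; simp only [Prod.mk.injEq, and_true, true_and]; ring
  right_inv p := by cases p; simp only [Prod.mk.injEq, and_true, true_and]; ring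

def sig6 : ((ℤ × ℤ) × (ℤ × ℤ)) ≃ ((ℤ × ℤ) × (ℤ × ℤ)) where
  toFun p := (p.1, -(p.1 + p.2))
  invFun p := (p.1, -(p.1 + p.2))
  left_inv p := by cases p; simp only [Prod.mk.injEq, and_true, true_and]; ring
  right_inv p := by cases p; simp only [Prod.mk.injEq, and_true, true_and]; ring

section six
variable {a : ℤ × ℤ → ℝ} (ha0 : a 0 = 0) (haE : ∀ k, a (-k) = a k)

include ha0 haE in
lemma six_sum (l m : ℤ × ℤ) :
    Gfun a (l, m) + (Gfun a (m, l) + (Gfun a (m, -(l + m)) + (Gfun a (-(l + m), m) +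
      (Gfun a (-(l + m), l) + Gfun a (l, -(l + m)))))) = 0 := by
  by_cases hl : l = 0
  · subst hl
    simp [Gfun, ha0, znorm_zero, haE]
  by_cases hm : m = 0
  · subst hm
    simp [Gfun, ha0, znorm_zero, haE]
  by_cases hn : l + m = 0
  · have hml : l = -m := by
      have := hn; rwa [add_eq_zero_iff_eq_neg] at this
    subst hml
    simp [Gfun, ha0, znorm_zero, hn, haE, neg_add_cancel, add_neg_cancel]
  · have hnn : -(l + m) ≠ 0 := neg_ne_zero.mpr hn
    have e1 : m + -(l + m) = -l := by ring
    have e2 : -(l + m) + m = -l := by ring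
    have e3 : -(l + m) + l = -m := by ring
    have e4 : l + -(l + m) = -m := by ring
    have e5 : m + l = l + m := by ring
    simp only [Gfun, e1, e2, e3, e4, e5, if_pos (And.intro hl hm), if_pos (And.intro hm hl),
      if_pos (And.intro hm hnn), if_pos (And.intro hnn hm), if_pos (And.intro hnn hl),
      if_pos (And.intro hl hnn), znorm_neg, haE, wedge_swap m l, wedge_c1, wedge_c2,
      wedge_c3, wedge_c4]
    have hX : znorm l ≠ 0 := ne_of_gt (znorm_pos hl)
    have hY : znorm m ≠ 0 := ne_of_gt (znorm_pos hm)
    have hZ : znorm (l + m) ≠ 0 := ne_of_gt (znorm_pos hn)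
    field_simp
    ring

include ha0 haE in
lemma tsum_G_zero (hG : Summable (Gfun a)) : ∑' p, Gfun a p = 0 := by
  have h2 : Summable (fun p => Gfun a (sig2 p)) := hG.comp_injective sig2.injective
  have h3 : Summable (fun p => Gfun a (sig3 p)) := hG.comp_injective sig3.injective
  have h4 : Summable (fun p => Gfun a (sig4 p)) := hG.comp_injective sig4.injective
  have h5 : Summable (fun p => Gfun a (sig5 p)) := hG.comp_injective sig5.injective
  have h6 : Summable (fun p => Gfun a (sig6 p)) := hG.comp_injective sig6.injective
  have key : ∑' p, (Gfun a p + (Gfun a (sig2 p) + (Gfun a (sig3 p) + (Gfun a (sig4 p) +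
      (Gfun a (sig5 p) + Gfun a (sig6 p)))))) = 0 := by
    have : ∀ p : (ℤ × ℤ) × (ℤ × ℤ), (Gfun a p + (Gfun a (sig2 p) + (Gfun a (sig3 p) +
        (Gfun a (sig4 p) + (Gfun a (sig5 p) + Gfun a (sig6 p)))))) = 0 := by
      rintro ⟨l, m⟩
      exact six_sum ha0 haE l m
    simp only [this, tsum_zero]
  rw [Summable.tsum_add hG (h2.add (h3.add (h4.add (h5.add h6)))),
    Summable.tsum_add h2 (h3.add (h4.add (h5.add h6))),
    Summable.tsum_add h3 (h4.add (h5.add h6)),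
    Summable.tsum_add h4 (h5.add h6),
    Summable.tsum_add h5 h6] at key
  rw [sig2.tsum_eq (Gfun a), sig3.tsum_eq (Gfun a), sig4.tsum_eq (Gfun a),
    sig5.tsum_eq (Gfun a), sig6.tsum_eq (Gfun a)] at key
  linarith

end six

-- ### bound helpers
lemma abs_one_div_sub_one_div_le {l m : ℤ × ℤ} (hl : l ≠ 0) (hm : m ≠ 0) :
    |1 / znorm l - 1 / znorm m| ≤ 1 := by
  have hL := one_le_znorm hl
  have hM := one_le_znorm hm
  have h1 : 0 < znorm l := lt_of_lt_of_le one_pos hL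
  have h2 : 0 < znorm m := lt_of_lt_of_le one_pos hM
  have b1 : 1 / znorm l ≤ 1 := by rw [div_le_one h1]; exact hL
  have b2 : 1 / znorm m ≤ 1 := by rw [div_le_one h2]; exact hM
  have c1 : 0 < 1 / znorm l := by positivity
  have c2 : 0 < 1 / znorm m := by positivity
  rw [abs_sub_le_iff]; constructor <;> linarith

lemma abs_div_znorm_le {a : ℤ × ℤ → ℝ} {M : ℝ} (ha0 : a 0 = 0) (hM : ∀ k, |a k| ≤ M)
    (k : ℤ × ℤ) : |a k / znorm k| ≤ M := by
  by_cases hk : k = 0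
  · subst hk; rw [ha0]; simp
    exact le_trans (abs_nonneg (a 0)) (hM 0)
  · rw [abs_div, abs_of_nonneg (znorm_nonneg k)]
    exact le_trans (div_le_self (abs_nonneg _) (one_le_znorm hk)) (hM k)

lemma pow_weight_le {C : ℝ} {a : ℤ × ℤ → ℝ} {N : ℕ}
    (hC : ∀ k, (1 + znorm k) ^ (N + 1) * |a k| ≤ C) (k : ℤ × ℤ) :
    znorm k * |a k| * (1 + znorm k) ^ N ≤ C := by
  have h := hC k
  have hz := znorm_nonneg k
  have expand : (1 + znorm k) ^ (N + 1) * |a k|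
      = znorm k * |a k| * (1 + znorm k) ^ N + (1 + znorm k) ^ N * |a k| := by ring
  nlinarith [mul_nonneg (pow_nonneg (by linarith : (0:ℝ) ≤ 1 + znorm k) N) (abs_nonneg (a k))]

lemma C_nonneg {C : ℝ} {a : ℤ × ℤ → ℝ} {N : ℕ} (hC : ∀ k, (1 + znorm k) ^ N * |a k| ≤ C) :
    0 ≤ C :=
  le_trans (mul_nonneg (pow_nonneg (by linarith [znorm_nonneg (0:ℤ×ℤ)]) N) (abs_nonneg _)) (hC 0)

/-- bound on the inner (nonlinearity) factor -/
lemma inner_bound {a : ℤ × ℤ → ℝ} {C : ℝ} {N : ℕ}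
    (hC : ∀ k, (1 + znorm k) ^ (N + 1) * |a k| ≤ C) {l m : ℤ × ℤ} (hl : l ≠ 0) (hm : m ≠ 0) :
    |wedge l m * (1 / znorm l - 1 / znorm m) * a l * a m|
      ≤ C * C / ((1 + znorm l) ^ N * (1 + znorm m) ^ N) := by
  have hCnn : 0 ≤ C := C_nonneg hC
  have hpl : (0:ℝ) < 1 + znorm l := by linarith [znorm_nonneg l]
  have hpm : (0:ℝ) < 1 + znorm m := by linarith [znorm_nonneg m]
  rw [le_div_iff₀ (mul_pos (pow_pos hpl N) (pow_pos hpm N))]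
  have habs : |wedge l m * (1 / znorm l - 1 / znorm m) * a l * a m|
      = |wedge l m| * |1 / znorm l - 1 / znorm m| * |a l| * |a m| := by
    rw [abs_mul, abs_mul, abs_mul]
  rw [habs]
  have hw := abs_wedge_le l m
  have hd := abs_one_div_sub_one_div_le hl hm
  have f1 := pow_weight_le hC l
  have f2 := pow_weight_le hC m
  have key : |wedge l m| * |1 / znorm l - 1 / znorm m| * |a l| * |a m|
        * ((1 + znorm l) ^ N * (1 + znorm m) ^ N)
      ≤ (znorm l * |a l| * (1 + znorm l) ^ N) * (znorm m * |a m| * (1 + znorm m) ^ N) := by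
    have s1 : |wedge l m| * |1 / znorm l - 1 / znorm m| ≤ znorm l * znorm m := by
      nlinarith [abs_nonneg (wedge l m), abs_nonneg (1 / znorm l - 1 / znorm m)]
    calc |wedge l m| * |1 / znorm l - 1 / znorm m| * |a l| * |a m|
        * ((1 + znorm l) ^ N * (1 + znorm m) ^ N)
        = (|wedge l m| * |1 / znorm l - 1 / znorm m|)
          * (|a l| * |a m| * ((1 + znorm l) ^ N * (1 + znorm m) ^ N)) := by ring
      _ ≤ (znorm l * znorm m) * (|a l| * |a m| * ((1 + znorm l) ^ N * (1 + znorm m) ^ N)) := by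
          exact mul_le_mul_of_nonneg_right s1
            (mul_nonneg (mul_nonneg (abs_nonneg _) (abs_nonneg _))
              (mul_nonneg (pow_nonneg hpl.le N) (pow_nonneg hpm.le N)))
      _ = (znorm l * |a l| * (1 + znorm l) ^ N) * (znorm m * |a m| * (1 + znorm m) ^ N) := by
          ring
  refine le_trans key ?_
  exact mul_le_mul f1 f2
    (mul_nonneg (mul_nonneg (znorm_nonneg m) (abs_nonneg _)) (pow_nonneg hpm.le N)) hCnn

lemma G_bound {a : ℤ × ℤ → ℝ} {M C : ℝ} (ha0 : a 0 = 0) (hM : ∀ k, |a k| ≤ M)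
    (hC : ∀ k, (1 + znorm k) ^ 5 * |a k| ≤ C) (p : (ℤ × ℤ) × (ℤ × ℤ)) :
    |Gfun a p| ≤ M * (C * C) * (((1 + znorm p.1) ^ 4)⁻¹ * ((1 + znorm p.2) ^ 4)⁻¹) := by
  obtain ⟨l, m⟩ := p
  have hMnn : 0 ≤ M := le_trans (abs_nonneg (a 0)) (hM 0)
  have hCnn : 0 ≤ C := C_nonneg hC
  simp only [Gfun, abs_mul]
  by_cases h : l ≠ 0 ∧ m ≠ 0
  · rw [if_pos h]
    have h1 := abs_div_znorm_le ha0 hM (l + m)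
    have h2 := inner_bound (N := 4) hC h.1 h.2
    calc |a (l + m) / znorm (l + m)|
          * |wedge l m * (1 / znorm l - 1 / znorm m) * a l * a m|
        ≤ M * (C * C / ((1 + znorm l) ^ 4 * (1 + znorm m) ^ 4)) := by
          apply mul_le_mul h1 h2 (abs_nonneg _) hMnn
      _ = M * (C * C) * (((1 + znorm l) ^ 4)⁻¹ * ((1 + znorm m) ^ 4)⁻¹) := by
          rw [div_eq_mul_inv, mul_inv]; ring
  · rw [if_neg h]
    simp only [abs_zero, mul_zero]
    have hpl : (0:ℝ) < 1 + znorm l := by linarith [znorm_nonneg l]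
    have hpm : (0:ℝ) < 1 + znorm m := by linarith [znorm_nonneg m]
    exact mul_nonneg (mul_nonneg hMnn (mul_nonneg hCnn hCnn))
      (mul_nonneg (inv_nonneg.2 (pow_nonneg hpl.le 4)) (inv_nonneg.2 (pow_nonneg hpm.le 4)))

lemma s_bound {a : ℤ × ℤ → ℝ} {C : ℝ}
    (hC : ∀ k', (1 + znorm k') ^ 9 * |a k'| ≤ C) (k l : ℤ × ℤ) :
    |sqgSummand a k l| ≤ C * C * ((1 + znorm k) ^ 4)⁻¹ * ((1 + znorm l) ^ 4)⁻¹ := by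
  have hCnn : 0 ≤ C := C_nonneg hC
  rw [sqgSummand]
  by_cases h : l ≠ 0 ∧ k - l ≠ 0
  · rw [if_pos h]
    have h2 := inner_bound (N := 8) hC h.1 h.2
    have hkey : (1 + znorm k) ^ 4 * (1 + znorm l) ^ 4
        ≤ (1 + znorm l) ^ 8 * (1 + znorm (k - l)) ^ 8 := by
      have h3 : 1 + znorm k ≤ (1 + znorm l) * (1 + znorm (k - l)) := by
        have := one_add_znorm_add_le l (k - l)
        rwa [add_sub_cancel] at this
      have h4 : (1 + znorm k) ^ 4 ≤ ((1 + znorm l) * (1 + znorm (k - l))) ^ 4 := by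
        apply pow_le_pow_left₀ (by linarith [znorm_nonneg k]) h3
      have h5 : (1 + znorm l) ^ 4 ≤ (1 + znorm l) ^ 4 * (1 + znorm (k - l)) ^ 4 := by
        nlinarith [pow_nonneg (by linarith [znorm_nonneg l] : (0:ℝ) ≤ 1 + znorm l) 4,
          one_le_pow₀ (by linarith [znorm_nonneg (k - l)] : (1:ℝ) ≤ 1 + znorm (k - l)) (n := 4)]
      calc (1 + znorm k) ^ 4 * (1 + znorm l) ^ 4
          ≤ ((1 + znorm l) * (1 + znorm (k - l))) ^ 4
            * ((1 + znorm l) ^ 4 * (1 + znorm (k - l)) ^ 4) := by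
            have hpl : (0:ℝ) < 1 + znorm l := by linarith [znorm_nonneg l]
            have hpm : (0:ℝ) < 1 + znorm (k - l) := by linarith [znorm_nonneg (k - l)]
            exact mul_le_mul h4 h5 (pow_nonneg hpl.le 4)
              (pow_nonneg (mul_nonneg hpl.le hpm.le) 4)
        _ = (1 + znorm l) ^ 8 * (1 + znorm (k - l)) ^ 8 := by ring
    have hpk : (0:ℝ) < 1 + znorm k := by linarith [znorm_nonneg k]
    have hpl : (0:ℝ) < 1 + znorm l := by linarith [znorm_nonneg l]
    refine le_trans h2 ?_
    rw [show C * C * ((1 + znorm k) ^ 4)⁻¹ * ((1 + znorm l) ^ 4)⁻¹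
        = C * C / ((1 + znorm k) ^ 4 * (1 + znorm l) ^ 4) by
      rw [div_eq_mul_inv, mul_inv]; ring]
    exact div_le_div_of_nonneg_left (mul_nonneg hCnn hCnn)
      (mul_pos (pow_pos hpk 4) (pow_pos hpl 4)) hkey
  · rw [if_neg h]
    simp only [abs_zero]
    have hpk : (0:ℝ) < 1 + znorm k := by linarith [znorm_nonneg k]
    have hpl : (0:ℝ) < 1 + znorm l := by linarith [znorm_nonneg l]
    exact mul_nonneg (mul_nonneg (mul_nonneg hCnn hCnn)
      (inv_nonneg.2 (pow_nonneg hpk.le 4))) (inv_nonneg.2 (pow_nonneg hpl.le 4))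

lemma F_eq_G (a : ℤ × ℤ → ℝ) (p : (ℤ × ℤ) × (ℤ × ℤ)) :
    a p.1 / znorm p.1 * sqgSummand a p.1 p.2 = Gfun a (eKL p) := by
  obtain ⟨k, l⟩ := p
  simp only [Gfun, eKL, Equiv.coe_fn_mk, sqgSummand]
  rw [show l + (k - l) = k by ring]
  rfl

lemma summable_G {a : ℤ × ℤ → ℝ} {M C : ℝ} (ha0 : a 0 = 0) (hM : ∀ k, |a k| ≤ M)
    (hC : ∀ k, (1 + znorm k) ^ 5 * |a k| ≤ C) : Summable (Gfun a) := by
  have hb : Summable (fun p : (ℤ × ℤ) × (ℤ × ℤ) =>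
      ((1 + znorm p.1) ^ 4)⁻¹ * ((1 + znorm p.2) ^ 4)⁻¹) :=
    summable_base.mul_of_nonneg summable_base
      (fun k => inv_nonneg.2 (pow_nonneg (by linarith [znorm_nonneg k]) 4))
      (fun k => inv_nonneg.2 (pow_nonneg (by linarith [znorm_nonneg k]) 4))
  exact Summable.of_norm_bounded (hb.mul_left (M * (C * C)))
    (fun p => by rw [Real.norm_eq_abs]; exact G_bound ha0 hM hC p)

set_option maxHeartbeats 1000000 in
/-- the main combinatorial cancellation -/
lemma tsum_g_zero {a : ℤ × ℤ → ℝ} {M C : ℝ} (ha0 : a 0 = 0) (haE : ∀ k, a (-k) = a k)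
    (hM : ∀ k, |a k| ≤ M) (hC : ∀ k, (1 + znorm k) ^ 5 * |a k| ≤ C)
    (hs : ∀ k, Summable fun l => |sqgSummand a k l|) :
    ∑' k, (a k / znorm k * ∑' l, sqgSummand a k l) = 0 := by
  have hGsum : Summable (Gfun a) := summable_G ha0 hM hC
  have hFsum : Summable (fun p : (ℤ × ℤ) × (ℤ × ℤ) =>
      a p.1 / znorm p.1 * sqgSummand a p.1 p.2) := by
    exact (hGsum.comp_injective eKL.injective).congr (fun p => (F_eq_G a p).symm)
  calc ∑' k, (a k / znorm k * ∑' l, sqgSummand a k l)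
      = ∑' k, ∑' l, (a k / znorm k * sqgSummand a k l) := by
        refine tsum_congr fun k => ?_
        rw [tsum_mul_left]
    _ = ∑' p : (ℤ × ℤ) × (ℤ × ℤ), a p.1 / znorm p.1 * sqgSummand a p.1 p.2 := by
        refine (Summable.tsum_prod' hFsum fun k => ?_).symm
        exact (((hs k).of_abs).mul_left (a k / znorm k)).congr (fun l => rfl)
    _ = ∑' p, Gfun a (eKL p) := tsum_congr (F_eq_G a)
    _ = ∑' p, Gfun a p := eKL.tsum_eq (Gfun a)
    _ = 0 := tsum_G_zero ha0 haE hGsum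

lemma tsum_abs_s_le {a : ℤ × ℤ → ℝ} {C : ℝ}
    (hC : ∀ k', (1 + znorm k') ^ 9 * |a k'| ≤ C)
    (hs : ∀ k, Summable fun l => |sqgSummand a k l|) (k : ℤ × ℤ) :
    ∑' l, |sqgSummand a k l| ≤ C * C * ((1 + znorm k) ^ 4)⁻¹
      * ∑' l : ℤ × ℤ, ((1 + znorm l) ^ 4)⁻¹ := by
  have h := Summable.tsum_le_tsum (f := fun l => |sqgSummand a k l|)
    (g := fun l => C * C * ((1 + znorm k) ^ 4)⁻¹ * ((1 + znorm l) ^ 4)⁻¹)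
    (fun l => s_bound hC k l) (hs k) (summable_base.mul_left _)
  rwa [tsum_mul_left] at h

def ffn (Θ : SQGSol) (k : ℤ × ℤ) (t : ℝ) : ℝ := if k ≠ 0 then Θ.θ t k ^ 2 / znorm k else 0
def gfn (Θ : SQGSol) (k : ℤ × ℤ) (t : ℝ) : ℝ :=
  Θ.θ t k / znorm k * ∑' l, sqgSummand (Θ.θ t) k l

lemma ffn_abs_bound {a : ℤ × ℤ → ℝ} {M C : ℝ} (ha0 : a 0 = 0) (hM : ∀ k, |a k| ≤ M)
    (hC : ∀ k, (1 + znorm k) ^ 5 * |a k| ≤ C) (k : ℤ × ℤ) :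
    |if k ≠ 0 then a k ^ 2 / znorm k else 0| ≤ M * C * ((1 + znorm k) ^ 4)⁻¹ := by
  have hMnn : 0 ≤ M := le_trans (abs_nonneg (a 0)) (hM 0)
  have hCnn : 0 ≤ C := C_nonneg hC
  have hpk : (0:ℝ) < 1 + znorm k := by linarith [znorm_nonneg k]
  by_cases hk : k = 0
  · subst hk; simp only [ne_eq, not_true_eq_false, if_false, abs_zero]
    positivity
  · rw [if_pos hk]
    have h1 : |a k ^ 2 / znorm k| = |a k / znorm k| * |a k| := by
      rw [← abs_mul]; congr 1; ring
    rw [h1]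
    have h2 : |a k / znorm k| ≤ M := abs_div_znorm_le ha0 hM k
    have h3 : |a k| ≤ C * ((1 + znorm k) ^ 4)⁻¹ := by
      rw [le_mul_inv_iff₀ (by positivity)]
      calc |a k| * (1 + znorm k) ^ 4 ≤ (1 + znorm k) ^ 5 * |a k| := by
            nlinarith [abs_nonneg (a k), pow_nonneg hpk.le 4,
              pow_le_pow_right₀ (by linarith [znorm_nonneg k] : (1:ℝ) ≤ 1 + znorm k)
                (by norm_num : (4:ℕ) ≤ 5)]
        _ ≤ C := hC k
    calc |a k / znorm k| * |a k| ≤ M * (C * ((1 + znorm k) ^ 4)⁻¹) :=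
          mul_le_mul h2 h3 (abs_nonneg _) hMnn
      _ = M * C * ((1 + znorm k) ^ 4)⁻¹ := by ring


open MeasureTheory in
set_option maxHeartbeats 1000000 in
/-- Conservation of the `H^{-1/2}` norm: for an even rapidly decaying Fourier-side SQG
solution, `Σ_{k ≠ 0} θ̂_k(t)²/|k|` is independent of `t ∈ [0,∞)`. -/
theorem sqg_hhalf_conservation (Θ : SQGSol) (hE : Θ.IsEven) :
    ∀ t₁ t₂ : ℝ, 0 ≤ t₁ → 0 ≤ t₂ →
      (∑' k : ℤ × ℤ, if k ≠ 0 then Θ.θ t₁ k ^ 2 / znorm k else 0) =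
        ∑' k : ℤ × ℤ, if k ≠ 0 then Θ.θ t₂ k ^ 2 / znorm k else 0 := by

  suffices H : ∀ t₁ t₂ : ℝ, 0 ≤ t₁ → t₁ ≤ t₂ →
      (∑' k : ℤ × ℤ, if k ≠ 0 then Θ.θ t₁ k ^ 2 / znorm k else 0) =
        ∑' k : ℤ × ℤ, if k ≠ 0 then Θ.θ t₂ k ^ 2 / znorm k else 0 by
    intro t₁ t₂ h1 h2
    rcases le_total t₁ t₂ with h | h
    · exact H t₁ t₂ h1 h
    · exact (H t₂ t₁ h2 h).symm
  intro t₁ t₂ ht₁ h12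
  rcases eq_or_lt_of_le h12 with rfl | hlt
  · rfl
  have ht₂ : (0:ℝ) < t₂ := lt_of_le_of_lt ht₁ hlt
  obtain ⟨M₀, hM₀⟩ := Θ.decay t₂ ht₂ 0
  obtain ⟨M₅, hM₅⟩ := Θ.decay t₂ ht₂ 5
  obtain ⟨M₉, hM₉⟩ := Θ.decay t₂ ht₂ 9
  have hM₀' : ∀ t ∈ Set.Icc (0:ℝ) t₂, ∀ k, |Θ.θ t k| ≤ M₀ := by
    intro t ht k
    have := hM₀ t ht k
    simpa using this
  -- continuity of each mode
  have hθcont : ∀ k, ContinuousOn (fun t => Θ.θ t k) (Set.Icc 0 t₂) := fun k x hx =>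
    (((Θ.ode k x hx.1).differentiableWithinAt).continuousWithinAt).mono
      Set.Icc_subset_Ici_self
  -- the ODE for the energy summands
  have hderiv : ∀ k, ∀ t, 0 ≤ t → HasDerivWithinAt (ffn Θ k) (gfn Θ k t) (Set.Ici 0) t := by
    intro k t ht
    by_cases hk : k = 0
    · subst hk
      have h1 : ffn Θ 0 = fun _ => (0:ℝ) := by
        funext s; simp [ffn]
      have h2 : gfn Θ 0 t = 0 := by
        simp [gfn, znorm_zero]
      rw [h1, h2]
      exact hasDerivWithinAt_const t _ 0
    · have h := ((Θ.ode k t ht).pow 2).div_const (znorm k)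
      have h1 : ffn Θ k = fun s => Θ.θ s k ^ 2 / znorm k := by
        funext s; simp [ffn, hk]
      rw [h1]
      refine h.congr_deriv ?_
      simp only [gfn]
      push_cast
      ring
  -- continuity of gfn
  have hgcont : ∀ k, ContinuousOn (gfn Θ k) (Set.Icc 0 t₂) := by
    intro k
    apply ContinuousOn.mul ((hθcont k).div_const _)
    apply continuousOn_tsum
      (u := fun l => M₉ * M₉ * ((1 + znorm k) ^ 4)⁻¹ * ((1 + znorm l) ^ 4)⁻¹)
    · intro l
      by_cases hc : l ≠ 0 ∧ k - l ≠ 0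
      · simp only [sqgSummand, if_pos hc]
        exact (continuousOn_const.mul (hθcont l)).mul (hθcont (k - l))
      · simp only [sqgSummand, if_neg hc]
        exact continuousOn_const
    · exact summable_base.mul_left _
    · intro l t ht
      rw [Real.norm_eq_abs]
      exact s_bound (hM₉ t ht) k l
  -- fundamental theorem of calculus on [t₁, t₂]
  have hFTC : ∀ k, (∫ t in t₁..t₂, gfn Θ k t) = ffn Θ k t₂ - ffn Θ k t₁ := by
    intro k
    apply intervalIntegral.integral_eq_sub_of_hasDeriv_right_of_le h12
    · intro x hx
      exact ((hderiv k x (le_trans ht₁ hx.1)).continuousWithinAt).mono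
        (fun y hy => le_trans ht₁ hy.1)
    · intro x hx
      exact (hderiv k x (le_trans ht₁ hx.1.le)).mono
        (fun y hy => le_trans (le_trans ht₁ hx.1.le) (le_of_lt hy))
    · exact ContinuousOn.intervalIntegrable_of_Icc h12
        ((hgcont k).mono (Set.Icc_subset_Icc ht₁ le_rfl))
  -- integrability on Ioc
  have hInt : ∀ k, IntegrableOn (gfn Θ k) (Set.Ioc t₁ t₂) volume := by
    intro k
    exact (ContinuousOn.intervalIntegrable_of_Icc h12
      ((hgcont k).mono (Set.Icc_subset_Icc ht₁ le_rfl))).1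
  -- uniform bound on gfn
  set Sb : ℝ := ∑' l : ℤ × ℤ, ((1 + znorm l) ^ 4)⁻¹ with hSb
  have hgbound : ∀ k, ∀ t ∈ Set.Icc (0:ℝ) t₂,
      |gfn Θ k t| ≤ M₀ * (M₉ * M₉ * Sb) * ((1 + znorm k) ^ 4)⁻¹ := by
    intro k t ht
    have hs := Θ.rhs_summable t ht.1 k
    have h1 : |Θ.θ t k / znorm k| ≤ M₀ :=
      abs_div_znorm_le (Θ.zero_mode t ht.1) (hM₀' t ht) k
    have h2 : |∑' l, sqgSummand (Θ.θ t) k l| ≤ ∑' l, |sqgSummand (Θ.θ t) k l| := by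
      have := norm_tsum_le_tsum_norm (f := fun l => sqgSummand (Θ.θ t) k l)
        (by simpa [Real.norm_eq_abs] using hs)
      simpa [Real.norm_eq_abs] using this
    have h3 := tsum_abs_s_le (hM₉ t ht) (fun k' => Θ.rhs_summable t ht.1 k') k
    have hM₀nn : 0 ≤ M₀ := le_trans (abs_nonneg _) (h1.trans le_rfl) |>.trans le_rfl
    have habs : |gfn Θ k t| = |Θ.θ t k / znorm k| * |∑' l, sqgSummand (Θ.θ t) k l| := by
      rw [gfn, abs_mul]
    rw [habs]
    have hnn2 : (0:ℝ) ≤ ∑' l, |sqgSummand (Θ.θ t) k l| :=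
      tsum_nonneg (fun l => abs_nonneg _)
    calc |Θ.θ t k / znorm k| * |∑' l, sqgSummand (Θ.θ t) k l|
        ≤ M₀ * (M₉ * M₉ * ((1 + znorm k) ^ 4)⁻¹ * Sb) := by
          apply mul_le_mul h1 (le_trans h2 h3) (abs_nonneg _) hM₀nn
      _ = M₀ * (M₉ * M₉ * Sb) * ((1 + znorm k) ^ 4)⁻¹ := by ring
  -- the total sum of gfn vanishes
  have hzero : ∀ t ∈ Set.Ioc t₁ t₂, ∑' k, gfn Θ k t = 0 := by
    intro t ht
    have ht' : t ∈ Set.Icc (0:ℝ) t₂ := ⟨le_trans ht₁ ht.1.le, ht.2⟩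
    exact tsum_g_zero (Θ.zero_mode t ht'.1) (hE t ht'.1) (hM₀' t ht')
      (fun k => hM₅ t ht' k) (fun k => Θ.rhs_summable t ht'.1 k)
  -- swap sum and integral
  have hIntNorm : ∀ k, (∫ t in Set.Ioc t₁ t₂, ‖gfn Θ k t‖) ≤
      (t₂ - t₁) * (M₀ * (M₉ * M₉ * Sb) * ((1 + znorm k) ^ 4)⁻¹) := by
    intro k
    calc (∫ t in Set.Ioc t₁ t₂, ‖gfn Θ k t‖)
        ≤ ∫ _ in Set.Ioc t₁ t₂, (M₀ * (M₉ * M₉ * Sb) * ((1 + znorm k) ^ 4)⁻¹) := by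
          apply setIntegral_mono_on ((hInt k).norm)
            (integrableOn_const measure_Ioc_lt_top.ne) measurableSet_Ioc
          intro x hx
          rw [Real.norm_eq_abs]
          exact hgbound k x ⟨le_trans ht₁ hx.1.le, hx.2⟩
      _ = (t₂ - t₁) * (M₀ * (M₉ * M₉ * Sb) * ((1 + znorm k) ^ 4)⁻¹) := by
          rw [setIntegral_const, Real.volume_real_Ioc_of_le h12,
            smul_eq_mul]
  have hsum_int : Summable (fun k => ∫ t in Set.Ioc t₁ t₂, ‖gfn Θ k t‖) := by
    apply Summable.of_nonneg_of_le
      (fun k => integral_nonneg (fun t => norm_nonneg _)) hIntNorm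
    exact (summable_base.mul_left (M₀ * (M₉ * M₉ * Sb))).mul_left (t₂ - t₁)
  have hHasSum : HasSum (fun k => ∫ t in Set.Ioc t₁ t₂, gfn Θ k t)
      (∫ t in Set.Ioc t₁ t₂, (∑' k, gfn Θ k t)) :=
    hasSum_integral_of_summable_integral_norm hInt hsum_int
  have hintzero : (∫ t in Set.Ioc t₁ t₂, (∑' k, gfn Θ k t)) = 0 := by
    rw [setIntegral_congr_fun measurableSet_Ioc (g := fun _ => (0:ℝ)) hzero]
    simp
  have htsum0 : ∑' k, (∫ t in Set.Ioc t₁ t₂, gfn Θ k t) = 0 := by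
    rw [hHasSum.tsum_eq, hintzero]
  -- summability of the energy summands
  have hsumf : ∀ t ∈ Set.Icc (0:ℝ) t₂, Summable (fun k => ffn Θ k t) := by
    intro t ht
    apply Summable.of_norm_bounded (summable_base.mul_left (M₀ * M₅))
    intro k
    rw [Real.norm_eq_abs]
    exact ffn_abs_bound (Θ.zero_mode t ht.1) (hM₀' t ht) (fun k' => hM₅ t ht k') k
  -- conclusion
  have h1mem : t₁ ∈ Set.Icc (0:ℝ) t₂ := ⟨ht₁, h12⟩
  have h2mem : t₂ ∈ Set.Icc (0:ℝ) t₂ := ⟨le_trans ht₁ h12, le_rfl⟩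
  have hdiff : ∑' k, (ffn Θ k t₂ - ffn Θ k t₁) = 0 := by
    rw [← htsum0]
    refine tsum_congr fun k => ?_
    rw [← intervalIntegral.integral_of_le h12, hFTC k]
  have hsub := Summable.tsum_sub (hsumf t₂ h2mem) (hsumf t₁ h1mem)
  rw [hdiff] at hsub
  have : (∑' k, ffn Θ k t₂) = ∑' k, ffn Θ k t₁ := by linarith [hsub.symm]
  exact this.symm
end
end

section
/- Let τ > 0 and let θ̂ be an even, rapidly decaying Fourier-side solution of the SQG equation with θ̂_k(0) = (p_τ)_k for all k, and suppose θ̂_k(t) = 0 for all t ≥ 0 whenever k₂ is odd. Then for all t ≥ 0: (i) Σ_{k∈ℤ², k≠0} θ̂_k(t)² (1 − 1/|k|) = (3 − 2/√5) τ², and (ii) Σ_{k∈ℤ², k∉{e,−e}} θ̂_k(t)² ≤ 10 τ². -/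
open scoped BigOperators
open MeasureTheory

noncomputable section

/-- The initial datum `p_τ`: value `1` at `±e = ±(1,0)`, value `τ` at
`±g = ±(0,2)` and `±(g+e) = ±(1,2)`, and `0` elsewhere. -/
def pdat (τ : ℝ) : ℤ × ℤ → ℝ := fun k =>
  if k = (1, 0) ∨ k = (-1, 0) then 1
  else if k = (0, 2) ∨ k = (0, -2) ∨ k = (1, 2) ∨ k = (-1, -2) then τ
  else 0

namespace SQGAux

lemma znorm_nonneg (k : ℤ × ℤ) : 0 ≤ znorm k := Real.sqrt_nonneg _

lemma znorm_neg (k : ℤ × ℤ) : znorm (-k) = znorm k := by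
  unfold znorm
  simp [Prod.fst_neg, Prod.snd_neg]

lemma one_le_znorm {k : ℤ × ℤ} (h : k ≠ 0) : 1 ≤ znorm k := by
  have h2 : k.1 ≠ 0 ∨ k.2 ≠ 0 := by
    by_contra hc
    push_neg at hc
    exact h (Prod.ext hc.1 hc.2)
  have h1 : (1 : ℝ) ≤ (k.1 : ℝ) ^ 2 + (k.2 : ℝ) ^ 2 := by
    rcases h2 with h2 | h2
    · have h3 : (1:ℤ) ≤ k.1^2 := by nlinarith [Int.one_le_abs h2, abs_nonneg k.1, sq_abs k.1]
      have h4 : (1:ℝ) ≤ (k.1:ℝ)^2 := by exact_mod_cast h3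
      nlinarith [sq_nonneg (k.2:ℝ)]
    · have h3 : (1:ℤ) ≤ k.2^2 := by nlinarith [Int.one_le_abs h2, abs_nonneg k.2, sq_abs k.2]
      have h4 : (1:ℝ) ≤ (k.2:ℝ)^2 := by exact_mod_cast h3
      nlinarith [sq_nonneg (k.1:ℝ)]
  calc (1:ℝ) = Real.sqrt 1 := Real.sqrt_one.symm
  _ ≤ znorm k := Real.sqrt_le_sqrt h1

lemma znorm_pos {k : ℤ × ℤ} (h : k ≠ 0) : 0 < znorm k :=
  lt_of_lt_of_le one_pos (one_le_znorm h)

lemma abs_wedge_le (l m : ℤ × ℤ) : |wedge l m| ≤ znorm l * znorm m := by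
  have h1 : wedge l m ^ 2 ≤ ((l.1:ℝ)^2 + (l.2:ℝ)^2) * ((m.1:ℝ)^2 + (m.2:ℝ)^2) := by
    unfold wedge
    push_cast
    nlinarith [sq_nonneg ((l.1:ℝ)*(m.1:ℝ) + (l.2:ℝ)*(m.2:ℝ))]
  have h2 : |wedge l m| = Real.sqrt (wedge l m ^ 2) := (Real.sqrt_sq_eq_abs _).symm
  rw [h2]
  calc Real.sqrt (wedge l m ^ 2)
      ≤ Real.sqrt (((l.1:ℝ)^2 + (l.2:ℝ)^2) * ((m.1:ℝ)^2 + (m.2:ℝ)^2)) := Real.sqrt_le_sqrt h1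
  _ = znorm l * znorm m := Real.sqrt_mul (by positivity) _

lemma summable_int_inv_sq : Summable (fun n : ℤ => ((1 + |(n:ℝ)|)^2)⁻¹) := by
  have hnat : Summable (fun n : ℕ => ((1 + (n:ℝ))^2)⁻¹) := by
    have h0 := Real.summable_one_div_nat_pow.mpr (by norm_num : 1 < 2)
    have h1 := (summable_nat_add_iff 1).mpr h0
    apply h1.congr
    intro n
    push_cast
    rw [one_div]
    ring_nf
  apply Summable.of_nat_of_neg
  · apply hnat.congr; intro n; simp
  · apply hnat.congr; intro n; simp

lemma abs_le_znorm_fst (k : ℤ × ℤ) : |(k.1:ℝ)| ≤ znorm k := by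
  rw [← Real.sqrt_sq_eq_abs]
  exact Real.sqrt_le_sqrt (by nlinarith [sq_nonneg (k.2:ℝ)])

lemma abs_le_znorm_snd (k : ℤ × ℤ) : |(k.2:ℝ)| ≤ znorm k := by
  rw [← Real.sqrt_sq_eq_abs]
  exact Real.sqrt_le_sqrt (by nlinarith [sq_nonneg (k.1:ℝ)])

lemma key_ineq {a b z : ℝ} (ha : 0 ≤ a) (hb : 0 ≤ b) (hz : 0 ≤ z)
    (haz : a ≤ z) (hbz : b ≤ z) :
    (1 + a)^2 * (1 + b)^2 ≤ (1 + z)^4 := by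
  have hab : a * b ≤ z * z := mul_le_mul haz hbz hb hz
  have e1 : (1 + a) * (1 + b) ≤ (1 + z)^2 := by nlinarith
  calc (1 + a)^2 * (1 + b)^2 = ((1 + a) * (1 + b))^2 := by ring
  _ ≤ ((1 + z)^2)^2 := by
      apply pow_le_pow_left₀ (by positivity) e1
  _ = (1 + z)^4 := by ring

lemma summable_w4 : Summable (fun k : ℤ × ℤ => ((1 + znorm k)^4)⁻¹) := by
  have h1 := summable_int_inv_sq
  have h2 : Summable (fun k : ℤ × ℤ => ((1 + |(k.1:ℝ)|)^2)⁻¹ * ((1 + |(k.2:ℝ)|)^2)⁻¹) :=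
    h1.mul_of_nonneg h1 (fun n => by positivity) (fun n => by positivity)
  apply h2.of_nonneg_of_le (fun k => by positivity)
  intro k
  rw [← mul_inv]
  exact inv_anti₀ (by positivity)
    (key_ineq (abs_nonneg _) (abs_nonneg _) (znorm_nonneg k)
      (abs_le_znorm_fst k) (abs_le_znorm_snd k))

lemma abs_sqgSummand_le (a : ℤ × ℤ → ℝ) (k l : ℤ × ℤ) :
    |sqgSummand a k l| ≤ (1 + znorm l) * (1 + znorm (k - l)) * |a l| * |a (k - l)| := by
  unfold sqgSummand
  split_ifs with h
  · obtain ⟨hl, hm⟩ := h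
    set zl := znorm l with hzl
    set zm := znorm (k - l) with hzm
    have h1l : 1 ≤ zl := one_le_znorm hl
    have h1m : 1 ≤ zm := one_le_znorm hm
    have hlpos : 0 < zl := lt_of_lt_of_le one_pos h1l
    have hmpos : 0 < zm := lt_of_lt_of_le one_pos h1m
    have hw := abs_wedge_le l (k - l)
    have hd : |1 / zl - 1 / zm| ≤ 1 / zl + 1 / zm := by
      calc |1 / zl - 1 / zm| ≤ |1 / zl| + |1 / zm| := abs_sub _ _
      _ = 1 / zl + 1 / zm := by
          rw [abs_of_pos (show (0:ℝ) < 1 / zl by positivity),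
            abs_of_pos (show (0:ℝ) < 1 / zm by positivity)]
    have step1 : |wedge l (k - l)| * |1 / zl - 1 / zm| ≤ (1 + zl) * (1 + zm) := by
      calc |wedge l (k - l)| * |1 / zl - 1 / zm| ≤ (zl * zm) * (1 / zl + 1 / zm) :=
        mul_le_mul hw hd (abs_nonneg _) (by positivity)
      _ = zm + zl := by field_simp
      _ ≤ (1 + zl) * (1 + zm) := by nlinarith
    calc |wedge l (k - l) * (1 / zl - 1 / zm) * a l * a (k - l)|
        = |wedge l (k - l)| * |1 / zl - 1 / zm| * |a l| * |a (k - l)| := by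
          rw [abs_mul, abs_mul, abs_mul]
    _ ≤ (1 + zl) * (1 + zm) * |a l| * |a (k - l)| := by
        have := mul_le_mul_of_nonneg_right step1 (abs_nonneg (a l))
        exact mul_le_mul_of_nonneg_right this (abs_nonneg (a (k - l)))
  · simp only [abs_zero]
    have := znorm_nonneg l
    have := znorm_nonneg (k - l)
    have h1 : (0:ℝ) ≤ (1 + znorm l) * (1 + znorm (k - l)) := by nlinarith
    exact mul_nonneg (mul_nonneg h1 (abs_nonneg _)) (abs_nonneg _)

/-- the weight factor in the conserved quantity -/
def cFun (θf : ℤ × ℤ → ℝ) (k : ℤ × ℤ) : ℝ :=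
  if k ≠ 0 then θf k * (1 - 1 / znorm k) else 0

lemma wedge_cyc1 (l m : ℤ × ℤ) : wedge m (-(l + m)) = wedge l m := by
  unfold wedge
  push_cast [Prod.fst_neg, Prod.snd_neg, Prod.fst_add, Prod.snd_add]
  ring

lemma wedge_cyc2 (l m : ℤ × ℤ) : wedge (-(l + m)) l = wedge l m := by
  unfold wedge
  push_cast [Prod.fst_neg, Prod.snd_neg, Prod.fst_add, Prod.snd_add]
  ring

lemma key_triple (θf : ℤ × ℤ → ℝ) (hθE : ∀ k, θf (-k) = θf k) (l m : ℤ × ℤ) :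
    cFun θf (l + m) * sqgSummand θf (l + m) l
    + cFun θf (m + (-l - m)) * sqgSummand θf (m + (-l - m)) m
    + cFun θf ((-l - m) + (-m - (-l - m))) *
        sqgSummand θf ((-l - m) + (-m - (-l - m))) (-l - m) = 0 := by
  have e2 : m + (-l - m) = -l := by ring
  have e4 : (-l - m) + (-m - (-l - m)) = -m := by ring
  have e6 : (-l - m : ℤ × ℤ) = -(l + m) := by ring
  rw [e2, e4, e6]
  by_cases hl : l = 0
  · subst hl
    simp [sqgSummand, cFun]
  by_cases hm : m = 0
  · subst hm
    simp [sqgSummand, cFun]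
  by_cases hn : l + m = 0
  · rw [hn]
    have hml : m = -l := eq_neg_of_add_eq_zero_right hn
    simp [sqgSummand, cFun, hml]
  -- generic case
  have hnl : (-l : ℤ × ℤ) ≠ 0 := neg_ne_zero.mpr hl
  have hnm : (-m : ℤ × ℤ) ≠ 0 := neg_ne_zero.mpr hm
  have hnn : (-(l + m) : ℤ × ℤ) ≠ 0 := neg_ne_zero.mpr hn
  -- cFun values
  have C1 : cFun θf (l + m) = θf (l + m) * (1 - 1 / znorm (l + m)) := if_pos hn
  have C2 : cFun θf (-l) = θf l * (1 - 1 / znorm l) := by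
    rw [cFun, if_pos hnl, hθE, znorm_neg]
  have C3 : cFun θf (-m) = θf m * (1 - 1 / znorm m) := by
    rw [cFun, if_pos hnm, hθE, znorm_neg]
  -- sqgSummand values
  have T1 : sqgSummand θf (l + m) l
      = wedge l m * (1 / znorm l - 1 / znorm m) * θf l * θf m := by
    have d1 : l + m - l = m := by ring
    rw [sqgSummand, if_pos (by rw [d1]; exact ⟨hl, hm⟩), d1]
  have T2 : sqgSummand θf (-l) m
      = wedge l m * (1 / znorm m - 1 / znorm (l + m)) * θf m * θf (l + m) := by
    have d2 : -l - m = -(l + m) := by ring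
    rw [sqgSummand, if_pos (by rw [d2]; exact ⟨hm, hnn⟩), d2, wedge_cyc1, hθE, znorm_neg]
  have T3 : sqgSummand θf (-m) (-(l + m))
      = wedge l m * (1 / znorm (l + m) - 1 / znorm l) * θf (l + m) * θf l := by
    have d3 : -m - (-(l + m)) = l := by ring
    rw [sqgSummand, if_pos (by rw [d3]; exact ⟨hnn, hl⟩), d3, wedge_cyc2, hθE, znorm_neg]
  rw [C1, C2, C3, T1, T2, T3]
  ring

lemma sym_zero (θf : ℤ × ℤ → ℝ) (hθE : ∀ k, θf (-k) = θf k)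
    (hrow : ∀ k : ℤ × ℤ, Summable fun l : ℤ × ℤ => |sqgSummand θf k l|)
    (hcol : Summable fun k : ℤ × ℤ => |cFun θf k| * ∑' l : ℤ × ℤ, |sqgSummand θf k l|) :
    (∑' k : ℤ × ℤ, cFun θf k * ∑' l : ℤ × ℤ, sqgSummand θf k l) = 0 := by
  set G : (ℤ × ℤ) × (ℤ × ℤ) → ℝ := fun p => cFun θf p.1 * sqgSummand θf p.1 p.2 with hG
  have hrowG : ∀ k, Summable fun l => |G (k, l)| := fun k =>
    ((hrow k).mul_left |cFun θf k|).congr fun l => (abs_mul _ _).symm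
  have habs : Summable fun p => |G p| := by
    rw [summable_prod_of_nonneg (fun p => abs_nonneg _)]
    refine ⟨hrowG, ?_⟩
    apply hcol.congr
    intro k
    rw [eq_comm]
    calc (∑' l, |G (k, l)|) = ∑' l, |cFun θf k| * |sqgSummand θf k l| :=
          tsum_congr fun l => abs_mul _ _
    _ = |cFun θf k| * ∑' l, |sqgSummand θf k l| := tsum_mul_left
  have hGsum : Summable G := summable_abs_iff.mp habs
  have hGrow : ∀ k, Summable fun l => G (k, l) := fun k => summable_abs_iff.mp (hrowG k)
  have step1 : (∑' k : ℤ × ℤ, cFun θf k * ∑' l : ℤ × ℤ, sqgSummand θf k l) = ∑' p, G p := by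
    calc (∑' k : ℤ × ℤ, cFun θf k * ∑' l : ℤ × ℤ, sqgSummand θf k l)
        = ∑' k, ∑' l, G (k, l) := tsum_congr fun k => tsum_mul_left.symm
    _ = ∑' p, G p := (hGsum.tsum_prod' hGrow).symm
  set ψ : ((ℤ × ℤ) × (ℤ × ℤ)) ≃ ((ℤ × ℤ) × (ℤ × ℤ)) :=
    ⟨fun p => (p.1 + p.2, p.1), fun q => (q.2, q.1 - q.2),
     fun p => Prod.ext rfl (by dsimp; ring), fun q => Prod.ext (by dsimp; ring) rfl⟩ with hψ
  set φ : ((ℤ × ℤ) × (ℤ × ℤ)) ≃ ((ℤ × ℤ) × (ℤ × ℤ)) :=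
    ⟨fun p => (p.2, -p.1 - p.2), fun q => (-q.1 - q.2, q.1),
     fun p => Prod.ext (by dsimp; ring) rfl, fun q => Prod.ext rfl (by dsimp; ring)⟩ with hφ
  have t0 : (∑' p, G (ψ p)) = ∑' p, G p := ψ.tsum_eq G
  have t1 : (∑' p, G (ψ (φ p))) = ∑' p, G p := by
    have h := (φ.trans ψ).tsum_eq G
    simpa only [Equiv.trans_apply] using h
  have t2 : (∑' p, G (ψ (φ (φ p)))) = ∑' p, G p := by
    have h := ((φ.trans φ).trans ψ).tsum_eq G
    simpa only [Equiv.trans_apply] using h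
  have hsum1 : Summable fun p => G (ψ p) := by
    have h := ψ.summable_iff.mpr hGsum
    simpa only [Function.comp_def] using h
  have hsum2 : Summable fun p => G (ψ (φ p)) := by
    have h := (φ.trans ψ).summable_iff.mpr hGsum
    simpa only [Function.comp_def, Equiv.trans_apply] using h
  have hsum3 : Summable fun p => G (ψ (φ (φ p))) := by
    have h := ((φ.trans φ).trans ψ).summable_iff.mpr hGsum
    simpa only [Function.comp_def, Equiv.trans_apply] using h
  have hzero : ∀ p : (ℤ × ℤ) × (ℤ × ℤ),
      G (ψ p) + G (ψ (φ p)) + G (ψ (φ (φ p))) = 0 := fun p => key_triple θf hθE p.1 p.2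
  have big : (∑' p, G (ψ p)) + (∑' p, G (ψ (φ p))) + (∑' p, G (ψ (φ (φ p)))) = 0 := by
    rw [← Summable.tsum_add hsum1 hsum2, ← Summable.tsum_add (hsum1.add hsum2) hsum3]
    calc (∑' p, (G (ψ p) + G (ψ (φ p)) + G (ψ (φ (φ p)))))
        = ∑' _p : (ℤ × ℤ) × (ℤ × ℤ), (0:ℝ) := tsum_congr hzero
    _ = 0 := tsum_zero
  rw [step1]
  rw [t0, t1, t2] at big
  linarith



lemma w4_nonneg (k : ℤ × ℤ) : 0 ≤ ((1 + znorm k)^4)⁻¹ :=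
  inv_nonneg.mpr (pow_nonneg (by linarith [znorm_nonneg k]) 4)

lemma w4_le_one (k : ℤ × ℤ) : ((1 + znorm k)^4)⁻¹ ≤ 1 := by
  have h : (1:ℝ) ≤ (1 + znorm k)^4 := one_le_pow₀ (by linarith [znorm_nonneg k])
  exact inv_le_one_of_one_le₀ h

def fFun (Θ : SQGSol) (k : ℤ × ℤ) (s : ℝ) : ℝ :=
  if k ≠ 0 then Θ.θ s k ^ 2 * (1 - 1 / znorm k) else 0

def gFun (Θ : SQGSol) (k : ℤ × ℤ) (s : ℝ) : ℝ :=
  cFun (Θ.θ s) k * ∑' l : ℤ × ℤ, sqgSummand (Θ.θ s) k l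

lemma bound_exists (Θ : SQGSol) (T : ℝ) (hT : 0 < T) :
    ∃ M : ℝ, 0 ≤ M ∧ ∀ t ∈ Set.Icc (0:ℝ) T, ∀ k, |Θ.θ t k| ≤ M * ((1 + znorm k)^5)⁻¹ := by
  obtain ⟨M, hM⟩ := Θ.decay T hT 5
  have hM0 : 0 ≤ M := by
    refine le_trans ?_ (hM 0 ⟨le_refl 0, hT.le⟩ 0)
    exact mul_nonneg (pow_nonneg (by linarith [znorm_nonneg (0:ℤ×ℤ)]) 5) (abs_nonneg _)
  refine ⟨M, hM0, fun t ht k => ?_⟩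
  have hp : (0:ℝ) < (1 + znorm k)^5 := pow_pos (by linarith [znorm_nonneg k]) 5
  rw [← div_eq_mul_inv, le_div_iff₀ hp, mul_comm]
  exact hM t ht k

lemma deriv_f (Θ : SQGSol) (k : ℤ × ℤ) (s : ℝ) (hs : 0 ≤ s) :
    HasDerivWithinAt (fFun Θ k) (gFun Θ k s) (Set.Ici 0) s := by
  by_cases hk : k = 0
  · subst hk
    have h1 : fFun Θ 0 = fun _ => (0:ℝ) := funext fun u => by simp [fFun]
    have h2 : gFun Θ 0 s = 0 := by simp [gFun, cFun]
    rw [h1, h2]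
    exact hasDerivWithinAt_const _ _ 0
  · have hode := Θ.ode k s hs
    have h := (hode.pow 2).mul_const (1 - 1 / znorm k)
    have hfeq : fFun Θ k = fun u => Θ.θ u k ^ 2 * (1 - 1 / znorm k) :=
      funext fun u => by simp [fFun, hk]
    rw [hfeq]
    refine h.congr_deriv ?_
    simp only [gFun, cFun, if_pos hk]
    push_cast
    ring

lemma conservation (Θ : SQGSol) (hE : Θ.IsEven) {t₀ : ℝ} (ht₀ : 0 ≤ t₀) :
    (∑' k : ℤ × ℤ, fFun Θ k t₀) = ∑' k : ℤ × ℤ, fFun Θ k 0 := by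
  set T : ℝ := t₀ + 1 with hTdef
  have hT : 0 < T := by positivity
  have ht₀T : t₀ ≤ T := by simp [hTdef]
  obtain ⟨M, hM0, hM⟩ := bound_exists Θ T hT
  have hzk : ∀ k : ℤ × ℤ, (0:ℝ) < 1 + znorm k := fun k => by linarith [znorm_nonneg k]
  -- pointwise bound with exponent 4
  have hθB : ∀ t ∈ Set.Icc (0:ℝ) T, ∀ k, |Θ.θ t k| ≤ M * ((1 + znorm k)^4)⁻¹ := by
    intro t ht k
    refine le_trans (hM t ht k) (mul_le_mul_of_nonneg_left ?_ hM0)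
    exact inv_anti₀ (pow_pos (hzk k) 4) (pow_le_pow_right₀ (by linarith [znorm_nonneg k]) (by norm_num))
  -- bound on the summand
  have hS : ∀ t ∈ Set.Icc (0:ℝ) T, ∀ k l : ℤ × ℤ,
      |sqgSummand (Θ.θ t) k l| ≤ (M * M) * (((1 + znorm l)^4)⁻¹ * ((1 + znorm (k - l))^4)⁻¹) := by
    intro t ht k l
    refine le_trans (abs_sqgSummand_le (Θ.θ t) k l) ?_
    have h1 := hM t ht l
    have h2 := hM t ht (k - l)
    have e1 := hzk l
    have e2 := hzk (k - l)
    calc (1 + znorm l) * (1 + znorm (k - l)) * |Θ.θ t l| * |Θ.θ t (k - l)|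
        ≤ (1 + znorm l) * (1 + znorm (k - l)) * (M * ((1 + znorm l)^5)⁻¹)
            * (M * ((1 + znorm (k - l))^5)⁻¹) := by
          apply mul_le_mul _ h2 (abs_nonneg _) _
          · exact mul_le_mul_of_nonneg_left h1 (by positivity)
          · positivity
    _ = (M * M) * (((1 + znorm l)^4)⁻¹ * ((1 + znorm (k - l))^4)⁻¹) := by
          field_simp
  -- uniform bound on the row sums
  set Q : ℝ := ∑' k : ℤ × ℤ, ((1 + znorm k)^4)⁻¹ with hQdef
  have hrowmaj : ∀ k : ℤ × ℤ, Summable (fun l : ℤ × ℤ => ((1 + znorm l)^4)⁻¹ * ((1 + znorm (k - l))^4)⁻¹) := by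
    intro k
    apply summable_w4.of_nonneg_of_le (fun l => mul_nonneg (w4_nonneg l) (w4_nonneg _))
    intro l
    calc ((1 + znorm l)^4)⁻¹ * ((1 + znorm (k - l))^4)⁻¹
        ≤ ((1 + znorm l)^4)⁻¹ * 1 := mul_le_mul_of_nonneg_left (w4_le_one _) (w4_nonneg l)
    _ = ((1 + znorm l)^4)⁻¹ := mul_one _
  have hrowbound : ∀ t ∈ Set.Icc (0:ℝ) T, ∀ k : ℤ × ℤ,
      (∑' l : ℤ × ℤ, |sqgSummand (Θ.θ t) k l|) ≤ (M * M) * Q := by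
    intro t ht k
    calc (∑' l : ℤ × ℤ, |sqgSummand (Θ.θ t) k l|)
        ≤ ∑' l : ℤ × ℤ, (M * M) * (((1 + znorm l)^4)⁻¹ * ((1 + znorm (k - l))^4)⁻¹) :=
          Summable.tsum_le_tsum (hS t ht k) (Θ.rhs_summable t ht.1 k) ((hrowmaj k).mul_left _)
    _ = (M * M) * ∑' l : ℤ × ℤ, ((1 + znorm l)^4)⁻¹ * ((1 + znorm (k - l))^4)⁻¹ := tsum_mul_left
    _ ≤ (M * M) * Q := by
        apply mul_le_mul_of_nonneg_left _ (mul_nonneg hM0 hM0)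
        apply Summable.tsum_le_tsum _ (hrowmaj k) summable_w4
        intro l
        calc ((1 + znorm l)^4)⁻¹ * ((1 + znorm (k - l))^4)⁻¹
            ≤ ((1 + znorm l)^4)⁻¹ * 1 := mul_le_mul_of_nonneg_left (w4_le_one _) (w4_nonneg l)
        _ = ((1 + znorm l)^4)⁻¹ := mul_one _
  have htsumabs : ∀ t ∈ Set.Icc (0:ℝ) T, ∀ k : ℤ × ℤ,
      |∑' l : ℤ × ℤ, sqgSummand (Θ.θ t) k l| ≤ (M * M) * Q := by
    intro t ht k
    refine le_trans ?_ (hrowbound t ht k)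
    simpa [Real.norm_eq_abs] using norm_tsum_le_tsum_norm (f := fun l => sqgSummand (Θ.θ t) k l)
      (by simpa [Real.norm_eq_abs] using Θ.rhs_summable t ht.1 k)
  -- bounds for cFun and fFun and gFun
  have hwle : ∀ k : ℤ × ℤ, k ≠ 0 → |1 - 1 / znorm k| ≤ 1 := by
    intro k hk
    have h1 := one_le_znorm hk
    have hpos : (0:ℝ) < znorm k := by linarith
    rw [abs_le]
    constructor
    · have : 1 / znorm k ≤ 1 := by rw [div_le_one hpos]; linarith
      linarith
    · have : 0 ≤ 1 / znorm k := by positivity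
      linarith
  have hcB : ∀ t ∈ Set.Icc (0:ℝ) T, ∀ k, |cFun (Θ.θ t) k| ≤ M * ((1 + znorm k)^4)⁻¹ := by
    intro t ht k
    by_cases hk : k = 0
    · subst hk
      simp only [cFun, ne_eq, not_true_eq_false, if_neg, ite_false]
      simp only [abs_zero]
      positivity
    · rw [cFun, if_pos hk, abs_mul]
      calc |Θ.θ t k| * |1 - 1 / znorm k| ≤ (M * ((1 + znorm k)^4)⁻¹) * 1 :=
            mul_le_mul (hθB t ht k) (hwle k hk) (abs_nonneg _)
              (by positivity)
      _ = M * ((1 + znorm k)^4)⁻¹ := mul_one _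
  have hfB : ∀ t ∈ Set.Icc (0:ℝ) T, ∀ k, |fFun Θ k t| ≤ (M * M) * ((1 + znorm k)^4)⁻¹ := by
    intro t ht k
    by_cases hk : k = 0
    · subst hk
      simp only [fFun, ne_eq, not_true_eq_false, ite_false, abs_zero]
      positivity
    · rw [fFun, if_pos hk, abs_mul, abs_pow, sq]
      have h1 := hθB t ht k
      have h2 : M * ((1 + znorm k)^4)⁻¹ ≤ M := by
        calc M * ((1 + znorm k)^4)⁻¹ ≤ M * 1 := mul_le_mul_of_nonneg_left (w4_le_one k) hM0
        _ = M := mul_one M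
      calc |Θ.θ t k| * |Θ.θ t k| * |1 - 1 / znorm k|
          ≤ (M * (M * ((1 + znorm k)^4)⁻¹)) * 1 := by
            apply mul_le_mul _ (hwle k hk) (abs_nonneg _) (by positivity)
            exact mul_le_mul (le_trans h1 h2) h1 (abs_nonneg _) hM0
      _ = (M * M) * ((1 + znorm k)^4)⁻¹ := by ring
  have hgB : ∀ t ∈ Set.Icc (0:ℝ) T, ∀ k,
      |gFun Θ k t| ≤ (M * ((1 + znorm k)^4)⁻¹) * ((M * M) * Q) := by
    intro t ht k
    rw [gFun, abs_mul]
    have hQ0 : 0 ≤ (M * M) * Q := le_trans (abs_nonneg _) (htsumabs t ht k)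
    exact mul_le_mul (hcB t ht k) (htsumabs t ht k) (abs_nonneg _) (by positivity)
  -- continuity
  have hθcont : ∀ k, ContinuousOn (fun s => Θ.θ s k) (Set.Icc (0:ℝ) T) := by
    intro k s hs
    exact ((Θ.ode k s hs.1).continuousWithinAt).mono Set.Icc_subset_Ici_self
  have hScont : ∀ k l : ℤ × ℤ, ContinuousOn (fun s => sqgSummand (Θ.θ s) k l) (Set.Icc (0:ℝ) T) := by
    intro k l
    by_cases hc : l ≠ 0 ∧ k - l ≠ 0
    · have he : (fun s => sqgSummand (Θ.θ s) k l)
          = fun s => wedge l (k - l) * (1 / znorm l - 1 / znorm (k - l)) * Θ.θ s l * Θ.θ s (k - l) :=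
        funext fun s => by rw [sqgSummand, if_pos hc]
      rw [he]
      exact ((continuousOn_const.mul (hθcont l)).mul (hθcont (k - l)))
    · have he : (fun s => sqgSummand (Θ.θ s) k l) = fun _ => (0:ℝ) :=
        funext fun s => by rw [sqgSummand, if_neg hc]
      rw [he]
      exact continuousOn_const
  have htscont : ∀ k : ℤ × ℤ,
      ContinuousOn (fun s => ∑' l : ℤ × ℤ, sqgSummand (Θ.θ s) k l) (Set.Icc (0:ℝ) T) := by
    intro k
    apply continuousOn_tsum (u := fun l : ℤ × ℤ => (M * M) * ((1 + znorm l)^4)⁻¹) (hScont k)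
      (summable_w4.mul_left (M * M))
    intro l s hs
    rw [Real.norm_eq_abs]
    calc |sqgSummand (Θ.θ s) k l|
        ≤ (M * M) * (((1 + znorm l)^4)⁻¹ * ((1 + znorm (k - l))^4)⁻¹) := hS s hs k l
    _ ≤ (M * M) * (((1 + znorm l)^4)⁻¹ * 1) := by
        apply mul_le_mul_of_nonneg_left _ (mul_nonneg hM0 hM0)
        exact mul_le_mul_of_nonneg_left (w4_le_one _) (w4_nonneg l)
    _ = (M * M) * ((1 + znorm l)^4)⁻¹ := by ring
  have hgcont : ∀ k : ℤ × ℤ, ContinuousOn (fun s => gFun Θ k s) (Set.Icc (0:ℝ) T) := by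
    intro k
    have hccont : ContinuousOn (fun s => cFun (Θ.θ s) k) (Set.Icc (0:ℝ) T) := by
      by_cases hk : k = 0
      · subst hk
        have he : (fun s => cFun (Θ.θ s) 0) = fun _ => (0:ℝ) := funext fun s => by simp [cFun]
        rw [he]; exact continuousOn_const
      · have he : (fun s => cFun (Θ.θ s) k) = fun s => Θ.θ s k * (1 - 1 / znorm k) :=
          funext fun s => by rw [cFun, if_pos hk]
        rw [he]
        exact (hθcont k).mul continuousOn_const
    exact hccont.mul (htscont k)
  -- FTC for each mode
  have hFTC : ∀ k : ℤ × ℤ, (∫ s in (0:ℝ)..t₀, gFun Θ k s) = fFun Θ k t₀ - fFun Θ k 0 := by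
    intro k
    apply intervalIntegral.integral_eq_sub_of_hasDeriv_right_of_le ht₀
    · intro s hs
      exact ((deriv_f Θ k s hs.1).continuousWithinAt).mono Set.Icc_subset_Ici_self
    · intro x hx
      exact (deriv_f Θ k x hx.1.le).mono (fun y hy => le_trans hx.1.le (le_of_lt hy))
    · apply ContinuousOn.intervalIntegrable
      rw [Set.uIcc_of_le ht₀]
      exact (hgcont k).mono (Set.Icc_subset_Icc_right ht₀T)
  have hmeas : MeasurableSet (Set.Ioc (0:ℝ) t₀) := measurableSet_Ioc
  have hsub : Set.Ioc (0:ℝ) t₀ ⊆ Set.Icc (0:ℝ) T := fun s hs => ⟨hs.1.le, le_trans hs.2 ht₀T⟩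
  have hgint : ∀ k : ℤ × ℤ, IntegrableOn (fun s => gFun Θ k s) (Set.Ioc (0:ℝ) t₀) := by
    intro k
    exact (((hgcont k).mono (Set.Icc_subset_Icc_right ht₀T)).integrableOn_Icc).mono_set
      Set.Ioc_subset_Icc_self
  have hgnormint : ∀ k : ℤ × ℤ, (∫ s in Set.Ioc (0:ℝ) t₀, ‖gFun Θ k s‖)
      ≤ ((M * ((1 + znorm k)^4)⁻¹) * ((M * M) * Q)) * t₀ := by
    intro k
    have hb : ∀ s ∈ Set.Ioc (0:ℝ) t₀, ‖‖gFun Θ k s‖‖ ≤ (M * ((1 + znorm k)^4)⁻¹) * ((M * M) * Q) := by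
      intro s hs
      rw [norm_norm, Real.norm_eq_abs]
      exact hgB s (hsub hs) k
    have hfin : volume (Set.Ioc (0:ℝ) t₀) < ⊤ := measure_Ioc_lt_top
    have hle := norm_setIntegral_le_of_norm_le_const hfin hb
    refine le_trans (le_abs_self _) (le_trans hle ?_)
    rw [Real.volume_real_Ioc_of_le ht₀, sub_zero]
  have hintsum : Summable (fun k : ℤ × ℤ => ∫ s in Set.Ioc (0:ℝ) t₀, ‖gFun Θ k s‖) := by
    apply Summable.of_nonneg_of_le (fun k => integral_nonneg (fun s => norm_nonneg _)) hgnormint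
    exact (((summable_w4.mul_left M).mul_right ((M * M) * Q)).mul_right t₀)
  have hswap : (∑' k : ℤ × ℤ, ∫ s in Set.Ioc (0:ℝ) t₀, gFun Θ k s)
      = ∫ s in Set.Ioc (0:ℝ) t₀, ∑' k : ℤ × ℤ, gFun Θ k s :=
    integral_tsum_of_summable_integral_norm hgint hintsum
  -- pointwise vanishing of the symmetrized sum
  have hptzero : ∀ s ∈ Set.Ioc (0:ℝ) t₀, (∑' k : ℤ × ℤ, gFun Θ k s) = 0 := by
    intro s hs
    have hsIcc : s ∈ Set.Icc (0:ℝ) T := hsub hs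
    have hrow := Θ.rhs_summable s hs.1.le
    have hcol : Summable fun k : ℤ × ℤ =>
        |cFun (Θ.θ s) k| * ∑' l : ℤ × ℤ, |sqgSummand (Θ.θ s) k l| := by
      apply Summable.of_nonneg_of_le
        (fun k => mul_nonneg (abs_nonneg _) (tsum_nonneg (fun l => abs_nonneg _)))
        (fun k => ?_) (((summable_w4.mul_left M).mul_right ((M * M) * Q)))
      exact mul_le_mul (hcB s hsIcc k) (hrowbound s hsIcc k)
        (tsum_nonneg (fun l => abs_nonneg _)) (by positivity)
    exact sym_zero (Θ.θ s) (hE s hs.1.le) hrow hcol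
  have hzero_int : (∫ s in Set.Ioc (0:ℝ) t₀, ∑' k : ℤ × ℤ, gFun Θ k s) = 0 := by
    rw [setIntegral_congr_fun hmeas hptzero]
    simp
  have hfsum : ∀ t ∈ Set.Icc (0:ℝ) T, Summable (fun k => fFun Θ k t) := by
    intro t ht
    refine summable_abs_iff.mp ?_
    exact Summable.of_nonneg_of_le (fun k => abs_nonneg _) (hfB t ht)
      (summable_w4.mul_left (M * M))
  have h1 : (∑' k : ℤ × ℤ, (fFun Θ k t₀ - fFun Θ k 0))
      = (∑' k : ℤ × ℤ, fFun Θ k t₀) - ∑' k : ℤ × ℤ, fFun Θ k 0 :=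
    Summable.tsum_sub (hfsum t₀ ⟨ht₀, ht₀T⟩) (hfsum 0 ⟨le_refl 0, hT.le⟩)
  have h2 : ∀ k : ℤ × ℤ, fFun Θ k t₀ - fFun Θ k 0 = ∫ s in Set.Ioc (0:ℝ) t₀, gFun Θ k s := by
    intro k
    rw [← hFTC k, intervalIntegral.integral_of_le ht₀]
  have key : (∑' k : ℤ × ℤ, fFun Θ k t₀) - (∑' k : ℤ × ℤ, fFun Θ k 0) = 0 := by
    rw [← h1]
    calc (∑' k : ℤ × ℤ, (fFun Θ k t₀ - fFun Θ k 0))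
        = ∑' k : ℤ × ℤ, ∫ s in Set.Ioc (0:ℝ) t₀, gFun Θ k s := tsum_congr h2
    _ = ∫ s in Set.Ioc (0:ℝ) t₀, ∑' k : ℤ × ℤ, gFun Θ k s := hswap
    _ = 0 := hzero_int
  linarith

lemma znorm_e : znorm (1, 0) = 1 := by
  rw [znorm]; norm_num

lemma znorm_me : znorm (-1, 0) = 1 := by
  rw [znorm]; norm_num

lemma znorm_g : znorm (0, 2) = 2 := by
  rw [znorm]
  norm_num

lemma znorm_mg : znorm (0, -2) = 2 := by
  rw [znorm]
  norm_num

lemma znorm_ge : znorm (1, 2) = Real.sqrt 5 := by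
  rw [znorm]; norm_num

lemma znorm_mge : znorm (-1, -2) = Real.sqrt 5 := by
  rw [znorm]; norm_num

lemma init_sum (τ : ℝ) :
    (∑' k : ℤ × ℤ, (if k ≠ 0 then (pdat τ k) ^ 2 * (1 - 1 / znorm k) else 0))
      = (3 - 2 / Real.sqrt 5) * τ ^ 2 := by
  classical
  have hsupp : ∀ k ∉ ({((1:ℤ),(0:ℤ)), (-1,0), (0,2), (0,-2), (1,2), (-1,-2)} : Finset (ℤ × ℤ)),
      (if k ≠ 0 then (pdat τ k) ^ 2 * (1 - 1 / znorm k) else 0) = 0 := by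
    intro k hk
    simp only [Finset.mem_insert, Finset.mem_singleton] at hk
    push_neg at hk
    obtain ⟨h1, h2, h3, h4, h5, h6⟩ := hk
    have hp : pdat τ k = 0 := by simp [pdat, h1, h2, h3, h4, h5, h6]
    simp [hp]
  rw [tsum_eq_sum hsupp]
  have e1 : pdat τ ((1:ℤ), (0:ℤ)) = 1 := by simp [pdat]
  have e2 : pdat τ ((-1:ℤ), (0:ℤ)) = 1 := by simp [pdat]
  have e3 : pdat τ ((0:ℤ), (2:ℤ)) = τ := by simp [pdat]
  have e4 : pdat τ ((0:ℤ), (-2:ℤ)) = τ := by simp [pdat]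
  have e5 : pdat τ ((1:ℤ), (2:ℤ)) = τ := by simp [pdat]
  have e6 : pdat τ ((-1:ℤ), (-2:ℤ)) = τ := by simp [pdat]
  have h5 : Real.sqrt 5 ≠ 0 := by
    have : (0:ℝ) < Real.sqrt 5 := Real.sqrt_pos.mpr (by norm_num)
    linarith
  rw [Finset.sum_insert (by decide), Finset.sum_insert (by decide), Finset.sum_insert (by decide),
    Finset.sum_insert (by decide), Finset.sum_insert (by decide), Finset.sum_singleton]
  rw [if_pos (by decide), if_pos (by decide), if_pos (by decide), if_pos (by decide),
    if_pos (by decide), if_pos (by decide)]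
  rw [e1, e2, e3, e4, e5, e6, znorm_e, znorm_me, znorm_g, znorm_mg, znorm_ge, znorm_mge]
  field_simp
  ring

lemma theta_le (Θ : SQGSol) {t : ℝ} (ht : 0 ≤ t) :
    ∃ M : ℝ, 0 ≤ M ∧ ∀ k, |Θ.θ t k| ≤ M * ((1 + znorm k)^4)⁻¹ := by
  obtain ⟨M, hM0, hM⟩ := bound_exists Θ (t + 1) (by linarith)
  refine ⟨M, hM0, fun k => ?_⟩
  refine le_trans (hM t ⟨ht, by linarith⟩ k) (mul_le_mul_of_nonneg_left ?_ hM0)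
  exact inv_anti₀ (pow_pos (by linarith [znorm_nonneg k]) 4)
    (pow_le_pow_right₀ (by linarith [znorm_nonneg k]) (by norm_num))

lemma theta_sq_le (Θ : SQGSol) {t : ℝ} (ht : 0 ≤ t) :
    ∃ M : ℝ, 0 ≤ M ∧ ∀ k, Θ.θ t k ^ 2 ≤ M * ((1 + znorm k)^4)⁻¹ := by
  obtain ⟨M, hM0, hM⟩ := theta_le Θ ht
  refine ⟨M * M, mul_nonneg hM0 hM0, fun k => ?_⟩
  have h1 := hM k
  have h2 : M * ((1 + znorm k)^4)⁻¹ ≤ M := by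
    calc M * ((1 + znorm k)^4)⁻¹ ≤ M * 1 := mul_le_mul_of_nonneg_left (w4_le_one k) hM0
    _ = M := mul_one M
  calc Θ.θ t k ^ 2 = |Θ.θ t k| * |Θ.θ t k| := by rw [← abs_mul, ← sq, abs_sq]
  _ ≤ M * (M * ((1 + znorm k)^4)⁻¹) :=
      mul_le_mul (le_trans h1 h2) h1 (abs_nonneg _) hM0
  _ = (M * M) * ((1 + znorm k)^4)⁻¹ := by ring

lemma two_le_znorm {k : ℤ × ℤ} (hk : k ≠ 0) (he : ¬ Odd k.2)
    (h1 : k ≠ (1, 0)) (h2 : k ≠ (-1, 0)) : 2 ≤ znorm k := by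
  have h4 : (4:ℝ) ≤ (k.1:ℝ)^2 + (k.2:ℝ)^2 := by
    have hint : (4:ℤ) ≤ k.1^2 + k.2^2 := by
      rw [Int.not_odd_iff_even] at he
      obtain ⟨m, hm⟩ := he
      by_cases hz : k.2 = 0
      · have hk1 : k.1 ≠ 0 := fun h => hk (Prod.ext h hz)
        have hk11 : k.1 ≠ 1 := fun h => h1 (Prod.ext h hz)
        have hk1m : k.1 ≠ -1 := fun h => h2 (Prod.ext h hz)
        have hcase : 2 ≤ k.1 ∨ k.1 ≤ -2 := by omega
        rcases hcase with hc | hc <;> nlinarith [sq_nonneg k.2]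
      · have hcase : 2 ≤ k.2 ∨ k.2 ≤ -2 := by omega
        rcases hcase with hc | hc <;> nlinarith [sq_nonneg k.1]
    exact_mod_cast hint
  calc (2:ℝ) = Real.sqrt 4 := by
        rw [show (4:ℝ) = 2^2 by norm_num, Real.sqrt_sq (by norm_num : (0:ℝ) ≤ 2)]
  _ ≤ znorm k := Real.sqrt_le_sqrt h4

lemma fFun_summable (Θ : SQGSol) {t : ℝ} (ht : 0 ≤ t) :
    Summable (fun k : ℤ × ℤ => fFun Θ k t) := by
  obtain ⟨M, hM0, hM⟩ := theta_sq_le Θ ht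
  refine summable_abs_iff.mp (Summable.of_nonneg_of_le (fun k => abs_nonneg _)
    (fun k => ?_) (summable_w4.mul_left M))
  by_cases hk : k = 0
  · subst hk
    simp only [fFun, ne_eq, not_true_eq_false, ite_false, abs_zero]
    positivity
  · rw [fFun, if_pos hk, abs_mul, abs_sq]
    have hwk : |1 - 1 / znorm k| ≤ 1 := by
      have hz1 := one_le_znorm hk
      have hzpos : (0:ℝ) < znorm k := by linarith
      rw [abs_le]
      constructor
      · have : 1 / znorm k ≤ 1 := by rw [div_le_one hzpos]; linarith
        linarith
      · have : 0 ≤ 1 / znorm k := by positivity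
        linarith
    calc Θ.θ t k ^ 2 * |1 - 1 / znorm k| ≤ (M * ((1 + znorm k)^4)⁻¹) * 1 :=
          mul_le_mul (hM k) hwk (abs_nonneg _) (by positivity)
    _ = M * ((1 + znorm k)^4)⁻¹ := mul_one _

end SQGAux

open SQGAux

/-- For the solution with initial datum `p_τ` (vanishing on odd `k₂`), for all `t ≥ 0`:
(i) `Σ_{k≠0} θ̂_k(t)² (1 − 1/|k|) = (3 − 2/√5) τ²`, and
(ii) `Σ_{k ∉ {e,−e}} θ̂_k(t)² ≤ 10 τ²`. -/
theorem sqg_perturbation_control (τ : ℝ) (hτ : 0 < τ) (Θ : SQGSol) (hE : Θ.IsEven)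
    (hinit : ∀ k : ℤ × ℤ, Θ.θ 0 k = pdat τ k)
    (hodd : ∀ t : ℝ, 0 ≤ t → ∀ k : ℤ × ℤ, Odd k.2 → Θ.θ t k = 0) :
    ∀ t : ℝ, 0 ≤ t →
      (∑' k : ℤ × ℤ, if k ≠ 0 then Θ.θ t k ^ 2 * (1 - 1 / znorm k) else 0) =
          (3 - 2 / Real.sqrt 5) * τ ^ 2 ∧
      (∑' k : ℤ × ℤ, if k ≠ (1, 0) ∧ k ≠ (-1, 0) then Θ.θ t k ^ 2 else 0) ≤
          10 * τ ^ 2 := by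
  intro t ht
  have hcons := conservation Θ hE ht
  have hinit_sum : (∑' k : ℤ × ℤ, fFun Θ k 0) = (3 - 2 / Real.sqrt 5) * τ ^ 2 := by
    have hcg : (∑' k : ℤ × ℤ, fFun Θ k 0)
        = ∑' k : ℤ × ℤ, (if k ≠ 0 then (pdat τ k) ^ 2 * (1 - 1 / znorm k) else 0) :=
      tsum_congr fun k => by rw [fFun, hinit k]
    rw [hcg, init_sum]
  have hpart1 : (∑' k : ℤ × ℤ, if k ≠ 0 then Θ.θ t k ^ 2 * (1 - 1 / znorm k) else 0)
      = (3 - 2 / Real.sqrt 5) * τ ^ 2 := by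
    have : (∑' k : ℤ × ℤ, fFun Θ k t) = (3 - 2 / Real.sqrt 5) * τ ^ 2 := by
      rw [hcons, hinit_sum]
    exact this
  refine ⟨hpart1, ?_⟩
  -- part (ii)
  obtain ⟨M, hM0, hM⟩ := theta_sq_le Θ ht
  have hS2sum : Summable (fun k : ℤ × ℤ =>
      if k ≠ (1, 0) ∧ k ≠ (-1, 0) then Θ.θ t k ^ 2 else 0) := by
    refine Summable.of_nonneg_of_le (fun k => ?_) (fun k => ?_) (summable_w4.mul_left M)
    · split_ifs
      · exact sq_nonneg _
      · exact le_refl 0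
    · split_ifs
      · exact hM k
      · exact mul_nonneg hM0 (w4_nonneg k)
  have hpt : ∀ k : ℤ × ℤ,
      (if k ≠ (1, 0) ∧ k ≠ (-1, 0) then Θ.θ t k ^ 2 else 0) ≤ 2 * fFun Θ k t := by
    intro k
    by_cases hk0 : k = 0
    · subst hk0
      have hz : Θ.θ t 0 = 0 := Θ.zero_mode t ht
      simp [fFun, hz]
    by_cases hke : k = (1, 0)
    · subst hke
      simp only [ne_eq, not_true_eq_false, false_and, if_false, fFun]
      rw [if_pos (by decide), znorm_e]
      norm_num
    by_cases hkme : k = (-1, 0)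
    · subst hkme
      simp only [ne_eq, not_true_eq_false, and_false, if_false, fFun]
      rw [if_pos (by decide), znorm_me]
      norm_num
    rw [if_pos ⟨hke, hkme⟩, fFun, if_pos hk0]
    by_cases ho : Odd k.2
    · rw [hodd t ht k ho]
      norm_num
    · have hz2 : 2 ≤ znorm k := two_le_znorm hk0 ho hke hkme
      have hzpos : (0:ℝ) < znorm k := by linarith
      have hhalf : 1 / znorm k ≤ 1 / 2 := by
        apply one_div_le_one_div_of_le (by norm_num) hz2
      nlinarith [sq_nonneg (Θ.θ t k)]
  have hmain : (∑' k : ℤ × ℤ, if k ≠ (1, 0) ∧ k ≠ (-1, 0) then Θ.θ t k ^ 2 else 0)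
      ≤ 2 * ((3 - 2 / Real.sqrt 5) * τ ^ 2) := by
    calc (∑' k : ℤ × ℤ, if k ≠ (1, 0) ∧ k ≠ (-1, 0) then Θ.θ t k ^ 2 else 0)
        ≤ ∑' k : ℤ × ℤ, 2 * fFun Θ k t :=
          Summable.tsum_le_tsum hpt hS2sum ((fFun_summable Θ ht).mul_left 2)
    _ = 2 * ∑' k : ℤ × ℤ, fFun Θ k t := tsum_mul_left
    _ = 2 * ((3 - 2 / Real.sqrt 5) * τ ^ 2) := by rw [hcons, hinit_sum]
  refine le_trans hmain ?_
  have h5 : (0:ℝ) < Real.sqrt 5 := Real.sqrt_pos.mpr (by norm_num)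
  have h25 : 0 ≤ 2 / Real.sqrt 5 := by positivity
  nlinarith [sq_nonneg τ]
end
end

section
/- For every a : ℤ² → ℝ with Σ_{k∈ℤ²₊} |k| a_k² < ∞, the sum Σ_{k∈ℤ²₊} (k₁ + 1/2) a_k a_{k+e} converges absolutely and satisfies |Σ_{k∈ℤ²₊} (k₁ + 1/2) a_k a_{k+e}| ≤ Σ_{k∈ℤ²₊} |k| a_k². -/
open scoped BigOperators
noncomputable section
lemma key_alg (s t : ℝ) (ht : 1 ≤ t) :
    ((s + 1/2)^2)^2 ≤ (s^2 + t^2) * ((s+1)^2 + t^2) := by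
  have h1 : (0:ℝ) ≤ t^2 - 1/4 := by nlinarith
  have h2 : (0:ℝ) ≤ 2*(s^2+s) + t^2 + 1/4 := by nlinarith [sq_nonneg (s + 1/2)]
  nlinarith [mul_nonneg h1 h2, sq_nonneg t]

-- pointwise key lemma
lemma key_pt (a : ℤ × ℤ → ℝ) (k : ℤ × ℤ) (hk : 1 ≤ k.2) :
    |((k.1 : ℝ) + 1 / 2) * a k * a (k + (1, 0))| ≤
      znorm k * a k ^ 2 / 2 + znorm (k + (1, 0)) * a (k + (1, 0)) ^ 2 / 2 := by
  have ht : (1:ℝ) ≤ (k.2 : ℝ) := by exact_mod_cast hk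
  set s : ℝ := (k.1 : ℝ) with hs
  set t : ℝ := (k.2 : ℝ) with htdef
  set x : ℝ := a k
  set y : ℝ := a (k + (1, 0))
  have hA : znorm k = Real.sqrt (s^2 + t^2) := rfl
  have hB : znorm (k + (1, 0)) = Real.sqrt ((s+1)^2 + t^2) := by
    simp only [znorm, Prod.fst_add, Prod.snd_add]
    push_cast
    ring_nf
    rfl
  set A : ℝ := Real.sqrt (s^2 + t^2) with hAdef
  set B : ℝ := Real.sqrt ((s+1)^2 + t^2) with hBdef
  rw [hA, hB]
  have hAnn : 0 ≤ A := Real.sqrt_nonneg _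
  have hBnn : 0 ≤ B := Real.sqrt_nonneg _
  have hPQ : A * B = Real.sqrt ((s^2 + t^2) * ((s+1)^2 + t^2)) :=
    (Real.sqrt_mul (by positivity) _).symm
  have hc2 : (s + 1/2)^2 ≤ A * B := by
    rw [hPQ]
    rw [show (s + 1/2)^2 = Real.sqrt (((s+1/2)^2)^2) from (Real.sqrt_sq (sq_nonneg _)).symm]
    exact Real.sqrt_le_sqrt (key_alg s t ht)
  -- now AM-GM
  have hR : 0 ≤ A * x ^ 2 / 2 + B * y ^ 2 / 2 := by positivity
  have hw2 : |(s + 1/2) * x * y| ^ 2 ≤ (A * x ^ 2 / 2 + B * y ^ 2 / 2) ^ 2 := by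
    rw [sq_abs]
    nlinarith [sq_nonneg (A * x^2 - B * y^2), mul_nonneg (mul_nonneg hAnn hBnn) (sq_nonneg (x*y)),
      mul_le_mul_of_nonneg_right hc2 (sq_nonneg (x*y))]
  calc |(s + 1/2) * x * y| = Real.sqrt (|(s + 1/2) * x * y| ^ 2) :=
        (Real.sqrt_sq (abs_nonneg _)).symm
    _ ≤ Real.sqrt ((A * x ^ 2 / 2 + B * y ^ 2 / 2) ^ 2) := Real.sqrt_le_sqrt hw2
    _ = A * x ^ 2 / 2 + B * y ^ 2 / 2 := Real.sqrt_sq hR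

/-- The sum `Σ_{k∈ℤ²₊} (k₁+1/2) a_k a_{k+e}` converges absolutely and is bounded by
`Σ_{k∈ℤ²₊} |k| a_k²`. -/
theorem J_functional_bound (a : ℤ × ℤ → ℝ)
    (h : Summable fun k : ℤ × ℤ => if 1 ≤ k.2 then znorm k * a k ^ 2 else 0) :
    (Summable fun k : ℤ × ℤ =>
      if 1 ≤ k.2 then |((k.1 : ℝ) + 1 / 2) * a k * a (k + (1, 0))| else 0) ∧
    |∑' k : ℤ × ℤ, if 1 ≤ k.2 then ((k.1 : ℝ) + 1 / 2) * a k * a (k + (1, 0)) else 0| ≤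
      ∑' k : ℤ × ℤ, if 1 ≤ k.2 then znorm k * a k ^ 2 else 0 := by
  set g : ℤ × ℤ → ℝ := fun k => if 1 ≤ k.2 then znorm k * a k ^ 2 else 0 with hgdef
  have hg' : Summable fun k : ℤ × ℤ => g (k + (1, 0)) := by
    have h2 := (Equiv.addRight ((1, 0) : ℤ × ℤ)).summable_iff (f := g)
    simp only [Function.comp_def, Equiv.coe_addRight] at h2
    exact h2.2 h
  have htshift : (∑' k : ℤ × ℤ, g (k + (1, 0))) = ∑' k, g k := by
    have h2 := (Equiv.addRight ((1, 0) : ℤ × ℤ)).tsum_eq g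
    simpa only [Function.comp_def, Equiv.coe_addRight] using h2
  have hgnn : ∀ k, 0 ≤ g k := by
    intro k
    rw [hgdef]
    dsimp only
    split
    · exact mul_nonneg (Real.sqrt_nonneg _) (sq_nonneg _)
    · exact le_rfl
  have key : ∀ k : ℤ × ℤ,
      (if 1 ≤ k.2 then |((k.1 : ℝ) + 1 / 2) * a k * a (k + (1, 0))| else 0) ≤
        g k / 2 + g (k + (1, 0)) / 2 := by
    intro k
    by_cases hk : 1 ≤ k.2
    · have h2 : (k + (1, 0)).2 = k.2 := by simp
      rw [hgdef]
      dsimp only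
      rw [if_pos hk, if_pos hk, h2, if_pos hk]
      have := key_pt a k hk
      linarith
    · have h1 := hgnn k
      have h2 := hgnn (k + (1, 0))
      rw [if_neg hk]
      linarith
  have hsum2 : Summable fun k : ℤ × ℤ => g k / 2 + g (k + (1, 0)) / 2 :=
    (h.div_const 2).add (hg'.div_const 2)
  have habs : Summable fun k : ℤ × ℤ =>
      if 1 ≤ k.2 then |((k.1 : ℝ) + 1 / 2) * a k * a (k + (1, 0))| else 0 := by
    apply Summable.of_nonneg_of_le _ key hsum2
    intro k
    split
    · exact abs_nonneg _
    · exact le_rfl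
  refine ⟨habs, ?_⟩
  have hFabs : ∀ k : ℤ × ℤ,
      |if 1 ≤ k.2 then ((k.1 : ℝ) + 1 / 2) * a k * a (k + (1, 0)) else 0| =
        if 1 ≤ k.2 then |((k.1 : ℝ) + 1 / 2) * a k * a (k + (1, 0))| else 0 := by
    intro k; split <;> simp
  have hF : Summable fun k : ℤ × ℤ =>
      if 1 ≤ k.2 then ((k.1 : ℝ) + 1 / 2) * a k * a (k + (1, 0)) else 0 := by
    apply Summable.of_abs
    simpa only [hFabs] using habs
  have step1 : |∑' k : ℤ × ℤ, if 1 ≤ k.2 then ((k.1 : ℝ) + 1 / 2) * a k * a (k + (1, 0)) else 0|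
      ≤ ∑' k : ℤ × ℤ, if 1 ≤ k.2 then |((k.1 : ℝ) + 1 / 2) * a k * a (k + (1, 0))| else 0 := by
    have h1 : Summable fun k : ℤ × ℤ =>
        ‖if 1 ≤ k.2 then ((k.1 : ℝ) + 1 / 2) * a k * a (k + (1, 0)) else 0‖ := by
      simpa only [Real.norm_eq_abs, hFabs] using habs
    have h2 := norm_tsum_le_tsum_norm h1
    simp only [Real.norm_eq_abs, hFabs] at h2
    exact h2
  have step2 : (∑' k : ℤ × ℤ, if 1 ≤ k.2 then |((k.1 : ℝ) + 1 / 2) * a k * a (k + (1, 0))| else 0)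
      ≤ ∑' k : ℤ × ℤ, (g k / 2 + g (k + (1, 0)) / 2) := Summable.tsum_le_tsum key habs hsum2
  have step3 : (∑' k : ℤ × ℤ, (g k / 2 + g (k + (1, 0)) / 2)) = ∑' k, g k := by
    rw [Summable.tsum_add (h.div_const 2) (hg'.div_const 2), tsum_div_const, tsum_div_const, htshift]
    ring
  exact le_trans step1 (le_trans step2 (le_of_eq step3))
end
end
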